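/- arXiv:1802.09051 — 7 statements merged into one kernel-verified Lean document; each statement's English description precedes it below -/
import Mathlib

section
/- A graph G is a corona graph (i.e., G = F ∘ K₁ for some graph F) if and only if every vertex of G is either a leaf or is adjacent to exactly one leaf of G. -/
open Finset

variable {V : Type} [Fintype V] [DecidableEq V]

def IsDomSet (G : SimpleGraph V) (D : Finset V) : Prop :=
  ∀ v : V, v ∉ D → ∃ u ∈ D, G.Adj u v

noncomputable def domNum (G : SimpleGraph V) : ℕ :=
  sInf {n | ∃ D : Finset V, IsDomSet G D ∧ D.card = n}

def IsVertexCover (G : SimpleGraph V) (C : Finset V) : Prop :=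
  ∀ ⦃u v : V⦄, G.Adj u v → u ∈ C ∨ v ∈ C

noncomputable def coverNum (G : SimpleGraph V) : ℕ :=
  sInf {n | ∃ C : Finset V, IsVertexCover G C ∧ C.card = n}

def IsIndepFinset (G : SimpleGraph V) (I : Finset V) : Prop :=
  ∀ u ∈ I, ∀ v ∈ I, ¬ G.Adj u v

noncomputable def indepNum (G : SimpleGraph V) : ℕ :=
  sSup {n | ∃ I : Finset V, IsIndepFinset G I ∧ I.card = n}

def IsLeaf (G : SimpleGraph V) [DecidableRel G.Adj] (v : V) : Prop :=
  G.degree v = 1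

def IsSupport (G : SimpleGraph V) [DecidableRel G.Adj] (v : V) : Prop :=
  ∃ u, G.Adj v u ∧ IsLeaf G u

def IsWeakSupport (G : SimpleGraph V) [DecidableRel G.Adj] (v : V) : Prop :=
  ((G.neighborFinset v).filter fun l => G.degree l = 1).card = 1

def IsBipartition (G : SimpleGraph V) (A B : Finset V) : Prop :=
  A ∪ B = Finset.univ ∧ Disjoint A B ∧
    ∀ ⦃u v : V⦄, G.Adj u v → (u ∈ A ∧ v ∈ B) ∨ (u ∈ B ∧ v ∈ A)

def corona {W : Type} (F : SimpleGraph W) : SimpleGraph (W ⊕ W) where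
  Adj x y :=
    match x, y with
    | Sum.inl u, Sum.inl v => F.Adj u v
    | Sum.inl u, Sum.inr v => u = v
    | Sum.inr u, Sum.inl v => u = v
    | Sum.inr _, Sum.inr _ => False
  symm := by
    constructor
    intro x y h
    cases x <;> cases y <;> simp_all <;> exact h.symm
  loopless := by
    constructor
    intro x
    cases x <;> simp

section CoronaAux

variable {V : Type} [Fintype V] [DecidableEq V] (G : SimpleGraph V) [DecidableRel G.Adj]

noncomputable def partner (v : V) : V :=
  if h : (G.neighborFinset v).card = 1 then (Finset.card_eq_one.mp h).choose
  else if h2 : ((G.neighborFinset v).filter fun l => G.degree l = 1).card = 1 then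
    (Finset.card_eq_one.mp h2).choose
  else v

lemma partner_spec_leaf {v : V} (h : IsLeaf G v) :
    G.neighborFinset v = {partner G v} := by
  have h' : (G.neighborFinset v).card = 1 := h
  rw [partner, dif_pos h']
  exact (Finset.card_eq_one.mp h').choose_spec

lemma partner_spec_supp {v : V} (h : ¬ IsLeaf G v) (h2 : IsWeakSupport G v) :
    (G.neighborFinset v).filter (fun l => G.degree l = 1) = {partner G v} := by
  have h' : ¬ (G.neighborFinset v).card = 1 := h
  have h2' : ((G.neighborFinset v).filter fun l => G.degree l = 1).card = 1 := h2
  rw [partner, dif_neg h', dif_pos h2']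
  exact (Finset.card_eq_one.mp h2').choose_spec

variable (hG : ∀ v : V, IsLeaf G v ∨ IsWeakSupport G v)

include hG

lemma adj_partner (v : V) : G.Adj v (partner G v) := by
  by_cases h : IsLeaf G v
  · have : partner G v ∈ G.neighborFinset v := by
      rw [partner_spec_leaf G h]; simp
    exact (SimpleGraph.mem_neighborFinset G v _).mp this
  · have h2 : IsWeakSupport G v := (hG v).resolve_left h
    have : partner G v ∈ (G.neighborFinset v).filter (fun l => G.degree l = 1) := by
      rw [partner_spec_supp G h h2]; simp
    exact (SimpleGraph.mem_neighborFinset G v _).mp (Finset.mem_filter.mp this).1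

lemma partner_leaf_of_not_leaf {v : V} (h : ¬ IsLeaf G v) : IsLeaf G (partner G v) := by
  have h2 : IsWeakSupport G v := (hG v).resolve_left h
  have : partner G v ∈ (G.neighborFinset v).filter (fun l => G.degree l = 1) := by
    rw [partner_spec_supp G h h2]; simp
  exact (Finset.mem_filter.mp this).2

omit hG in
lemma eq_partner_of_adj_leaf {v u : V} (h : IsLeaf G v) (hu : G.Adj v u) :
    u = partner G v := by
  have : u ∈ G.neighborFinset v := (SimpleGraph.mem_neighborFinset G v u).mpr hu
  rw [partner_spec_leaf G h] at this
  simpa using this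

lemma eq_partner_of_adj_of_leaf {v u : V} (h : ¬ IsLeaf G v) (hu : G.Adj v u)
    (hl : IsLeaf G u) : u = partner G v := by
  have h2 : IsWeakSupport G v := (hG v).resolve_left h
  have : u ∈ (G.neighborFinset v).filter (fun l => G.degree l = 1) :=
    Finset.mem_filter.mpr ⟨(SimpleGraph.mem_neighborFinset G v u).mpr hu, hl⟩
  rw [partner_spec_supp G h h2] at this
  simpa using this

lemma partner_partner (v : V) : partner G (partner G v) = v := by
  by_cases hp : IsLeaf G (partner G v)
  · exact (eq_partner_of_adj_leaf G hp ((adj_partner G hG v).symm)).symm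
  · have hv : IsLeaf G v := by
      by_contra hv
      exact hp (partner_leaf_of_not_leaf G hG hv)
    exact (eq_partner_of_adj_of_leaf G hG hp ((adj_partner G hG v).symm) hv).symm

omit hG

lemma corona_adj_inl_inr {W : Type} (F : SimpleGraph W) (w : W) :
    (corona F).Adj (Sum.inl w) (Sum.inr w) := by
  show w = w
  rfl

lemma corona_adj_inr_left {W : Type} (F : SimpleGraph W) (w : W) (z : W ⊕ W) :
    (corona F).Adj (Sum.inr w) z ↔ z = Sum.inl w := by
  cases z with
  | inl u => show w = u ↔ _ ; simp [eq_comm]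
  | inr u => show False ↔ _ ; simp

lemma leaf_of_eq_inr {W : Type} {F : SimpleGraph W} (e : G ≃g corona F) {x : V} {w : W}
    (hx : e x = Sum.inr w) : IsLeaf G x := by
  have hset : G.neighborFinset x = {e.symm (Sum.inl w)} := by
    ext y
    simp only [SimpleGraph.mem_neighborFinset, Finset.mem_singleton]
    rw [show G.Adj x y ↔ (corona F).Adj (e x) (e y) from e.map_adj_iff.symm, hx,
      corona_adj_inr_left]
    constructor
    · intro h
      apply_fun e.symm at h
      simpa using h
    · intro h
      apply_fun e at h
      simpa using h
  show (G.neighborFinset x).card = 1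
  rw [hset]; simp

end CoronaAux

theorem corona_graph_iff (G : SimpleGraph V) [DecidableRel G.Adj] :
    (∃ (W : Type) (F : SimpleGraph W), Nonempty (G ≃g corona F)) ↔
      ∀ v : V, IsLeaf G v ∨ IsWeakSupport G v := by
  constructor
  · rintro ⟨W, F, ⟨e⟩⟩ v
    cases hv : e v with
    | inr w => exact Or.inl (leaf_of_eq_inr G e hv)
    | inl w =>
      right
      have hv' : e.symm (Sum.inl w) = v := by
        rw [← hv]; exact e.symm_apply_apply v
      have hset : (G.neighborFinset v).filter (fun l => G.degree l = 1)
          = {e.symm (Sum.inr w)} := by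
        ext y
        simp only [Finset.mem_filter, SimpleGraph.mem_neighborFinset, Finset.mem_singleton]
        constructor
        · rintro ⟨hadj, hdeg⟩
          have hadj' : (corona F).Adj (Sum.inl w) (e y) := by
            rw [← hv]; exact e.map_adj_iff.mpr hadj
          cases hy : e y with
          | inl u =>
            rw [hy] at hadj'
            exfalso
            have hy' : e.symm (Sum.inl u) = y := by
              rw [← hy]; exact e.symm_apply_apply y
            have h1 : G.Adj y v := hadj.symm
            have h2 : G.Adj y (e.symm (Sum.inr u)) := by
              rw [← hy']
              exact e.symm.map_adj_iff.mpr (corona_adj_inl_inr F u)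
            have hne : v ≠ e.symm (Sum.inr u) := by
              intro h
              apply_fun e at h
              rw [hv] at h
              simp at h
            have hlt : 1 < (G.neighborFinset y).card :=
              Finset.one_lt_card.mpr
                ⟨v, (SimpleGraph.mem_neighborFinset G y v).mpr h1,
                  e.symm (Sum.inr u), (SimpleGraph.mem_neighborFinset G y _).mpr h2, hne⟩
            have hdeg' : (G.neighborFinset y).card = 1 := hdeg
            omega
          | inr u =>
            rw [hy] at hadj'
            have hwu : w = u := hadj'
            rw [← hwu] at hy
            apply_fun e.symm at hy
            simpa using hy
        · rintro rfl
          refine ⟨?_, ?_⟩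
          · have h2 : G.Adj (e.symm (Sum.inl w)) (e.symm (Sum.inr w)) :=
              e.symm.map_adj_iff.mpr (corona_adj_inl_inr F w)
            rwa [hv'] at h2
          · exact leaf_of_eq_inr G e (show e (e.symm (Sum.inr w)) = Sum.inr w by simp)
      show ((G.neighborFinset v).filter fun l => G.degree l = 1).card = 1
      rw [hset]; simp
  · intro hG
    letI : LinearOrder V := LinearOrder.lift' (Fintype.equivFin V) (Equiv.injective _)
    set s : Set V := {v | ¬ IsLeaf G v ∨ (IsLeaf G (partner G v) ∧ v < partner G v)} with hs
    have hpleaf : ∀ v ∈ s, IsLeaf G (partner G v) := by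
      intro v hv
      rcases hv with h | ⟨h, _⟩
      · exact partner_leaf_of_not_leaf G hG h
      · exact h
    have hxor : ∀ v ∈ s, partner G v ∉ s := by
      intro v hv hv2
      have h1 : IsLeaf G (partner G v) := hpleaf v hv
      rcases hv2 with h | ⟨h2, hlt⟩
      · exact h h1
      · rw [partner_partner G hG] at h2 hlt
        rcases hv with h | ⟨_, hlt2⟩
        · exact h h2
        · exact absurd (hlt.trans hlt2) (lt_irrefl _)
    have hmem : ∀ v, v ∉ s → partner G v ∈ s := by
      intro v hv
      by_contra hv2
      rw [hs] at hv hv2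
      simp only [Set.mem_setOf_eq, not_or, not_and, not_lt, not_not] at hv hv2
      obtain ⟨hlv, hv⟩ := hv
      obtain ⟨hlpv, hv2⟩ := hv2
      rw [partner_partner G hG] at hv2
      exact (adj_partner G hG v).ne (le_antisymm (hv2 hlv) (hv hlpv))
    have hinj : Function.Injective
        (Sum.elim (Subtype.val : ↥s → V) (fun a : ↥s => partner G a.1)) := by
      rintro (a | a) (b | b) h
      · simp only [Sum.elim_inl] at h
        exact congrArg Sum.inl (Subtype.ext h)
      · simp only [Sum.elim_inl, Sum.elim_inr] at h
        exact absurd (h ▸ a.2) (hxor b.1 b.2)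
      · simp only [Sum.elim_inl, Sum.elim_inr] at h
        exact absurd (h.symm ▸ b.2) (hxor a.1 a.2)
      · simp only [Sum.elim_inr] at h
        have h' : a.1 = b.1 := by
          have hc := congrArg (partner G) h
          rwa [partner_partner G hG, partner_partner G hG] at hc
        exact congrArg Sum.inr (Subtype.ext h')
    have hsurj : Function.Surjective
        (Sum.elim (Subtype.val : ↥s → V) (fun a : ↥s => partner G a.1)) := by
      intro v
      by_cases hv : v ∈ s
      · exact ⟨Sum.inl ⟨v, hv⟩, rfl⟩
      · exact ⟨Sum.inr ⟨partner G v, hmem v hv⟩, partner_partner G hG v⟩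
    refine ⟨↥s, G.induce s,
      ⟨SimpleGraph.Iso.symm ⟨Equiv.ofBijective _ ⟨hinj, hsurj⟩, ?_⟩⟩⟩
    rintro (a | a) (b | b)
    · exact Iff.rfl
    · show G.Adj a.1 (partner G b.1) ↔ (a = b)
      constructor
      · intro h
        have hlb : IsLeaf G (partner G b.1) := hpleaf b.1 b.2
        have heq := eq_partner_of_adj_leaf G hlb h.symm
        rw [partner_partner G hG] at heq
        exact Subtype.ext heq
      · rintro rfl
        exact adj_partner G hG a.1
    · show G.Adj (partner G a.1) b.1 ↔ (a = b)
      constructor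
      · intro h
        have hla : IsLeaf G (partner G a.1) := hpleaf a.1 a.2
        have heq := eq_partner_of_adj_leaf G hla h
        rw [partner_partner G hG] at heq
        exact Subtype.ext heq.symm
      · rintro rfl
        exact (adj_partner G hG a.1).symm
    · show G.Adj (partner G a.1) (partner G b.1) ↔ False
      simp only [iff_false]
      intro h
      have hla : IsLeaf G (partner G a.1) := hpleaf a.1 a.2
      have heq := eq_partner_of_adj_leaf G hla h
      rw [partner_partner G hG] at heq
      exact hxor b.1 b.2 (heq ▸ a.2)
end

section
/- Let T be a tree with bipartition (A,B), 1 ≤ |A| ≤ |B|. Then γ(T) = |A| if and only if: (a) every support vertex v ∈ B is a weak support and all non-leaf neighbors of v are support vertices; and (b) for any two vertices x, y ∈ A that are neither leaves nor supports, d(x,y) ≠ 2. -/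
open Finset

variable {V : Type} [Fintype V] [DecidableEq V]

lemma leaf_eq_of_adj {T : SimpleGraph V} [DecidableRel T.Adj] {l u w : V}
    (hl : IsLeaf T l) (hu : T.Adj l u) (hw : T.Adj l w) : u = w := by
  obtain ⟨a, ha⟩ := Finset.card_eq_one.mp (hl : (T.neighborFinset l).card = 1)
  have h1 : u = a := by simpa [ha] using (by simpa using hu : u ∈ T.neighborFinset l)
  have h2 : w = a := by simpa [ha] using (by simpa using hw : w ∈ T.neighborFinset l)
  rw [h1, h2]

lemma exists_adj_of_conn {T : SimpleGraph V} (hc : T.Connected) {v w : V} (hne : v ≠ w) :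
    ∃ u, T.Adj v u := by
  obtain ⟨p⟩ := hc v w
  obtain ⟨u, h, _, _⟩ :=
    SimpleGraph.Walk.not_nil_iff.mp (SimpleGraph.Walk.not_nil_of_ne (p := p) hne)
  exact ⟨u, h⟩

theorem tree_domNum_eq_smaller_side_characterization (T : SimpleGraph V)
    [DecidableRel T.Adj] (A B : Finset V) (htree : T.IsTree)
    (hbip : IsBipartition T A B) (hA : 1 ≤ A.card) (hAB : A.card ≤ B.card) :
    domNum T = A.card ↔
      ((∀ v ∈ B, IsSupport T v →
          IsWeakSupport T v ∧ ∀ u, T.Adj v u → ¬ IsLeaf T u → IsSupport T u) ∧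
       (∀ x ∈ A, ∀ y ∈ A, ¬ IsLeaf T x → ¬ IsSupport T x → ¬ IsLeaf T y → ¬ IsSupport T y →
          T.dist x y ≠ 2)) := by
  classical
  obtain ⟨hU, hdisj, hE⟩ := hbip
  have hconn := htree.isConnected
  have hAorB : ∀ w : V, w ∈ A ∨ w ∈ B := fun w =>
    Finset.mem_union.mp (hU ▸ Finset.mem_univ w)
  have hnAB : ∀ {w : V}, w ∈ A → w ∉ B := fun hw => Finset.disjoint_left.mp hdisj hw
  have hadjB : ∀ {u w : V}, T.Adj u w → u ∈ A → w ∈ B := by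
    intro u w h hu
    rcases hE h with ⟨_, hw⟩ | ⟨hu', _⟩
    · exact hw
    · exact absurd hu' (hnAB hu)
  have hadjA : ∀ {u w : V}, T.Adj u w → u ∈ B → w ∈ A := by
    intro u w h hu
    rcases hE h with ⟨hu', _⟩ | ⟨_, hw⟩
    · exact absurd hu (hnAB hu')
    · exact hw
  have hnadjAA : ∀ {u w : V}, u ∈ A → w ∈ A → ¬ T.Adj u w := by
    intro u w hu hw h
    exact hnAB hw (hadjB h hu)
  obtain ⟨a0, ha0⟩ := Finset.card_pos.mp (lt_of_lt_of_le Nat.zero_lt_one hA)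
  obtain ⟨b0, hb0⟩ := Finset.card_pos.mp
    (lt_of_lt_of_le (lt_of_lt_of_le Nat.zero_lt_one hA) hAB)
  have hnbr : ∀ w : V, ∃ u, T.Adj w u := by
    intro w
    by_cases hw : w = a0
    · exact exists_adj_of_conn hconn (fun h => hnAB (hw ▸ ha0) (h ▸ hb0))
    · exact exists_adj_of_conn hconn hw
  have hAdom : IsDomSet T A := by
    intro w hw
    rcases hAorB w with h | h
    · exact absurd h hw
    · obtain ⟨u, hu⟩ := hnbr w
      exact ⟨u, hadjA hu h, hu.symm⟩
  constructor
  · intro hnum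
    have build : ∀ v x y : V, v ∈ B → x ∈ A → y ∈ A → x ≠ y → T.Adj v x → T.Adj v y →
        (∀ w, w ∈ B → w ≠ v → ∃ u, T.Adj u w ∧ u ∈ A ∧ u ≠ x ∧ u ≠ y) → False := by
      intro v x y hvB hxA hyA hxy hvx hvy hother
      set D : Finset V := (A \ {x, y}) ∪ {v} with hDdef
      have hvD : v ∈ D := Finset.mem_union_right _ (Finset.mem_singleton_self v)
      have hdom : IsDomSet T D := by
        intro w hwD
        rcases hAorB w with hw | hw
        · by_cases hwx : w = x
          · exact ⟨v, hvD, hwx ▸ hvx⟩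
          · by_cases hwy : w = y
            · exact ⟨v, hvD, hwy ▸ hvy⟩
            · exact absurd (Finset.mem_union_left _
                (Finset.mem_sdiff.mpr ⟨hw, by simp [hwx, hwy]⟩)) hwD
        · have hwv : w ≠ v := by rintro rfl; exact hwD hvD
          obtain ⟨u, hu, huA, hux, huy⟩ := hother w hw hwv
          exact ⟨u, Finset.mem_union_left _
            (Finset.mem_sdiff.mpr ⟨huA, by simp [hux, huy]⟩), hu⟩
      have hvA : v ∉ A \ ({x, y} : Finset V) := fun h => hnAB (Finset.mem_sdiff.mp h).1 hvB
      have hsub : ({x, y} : Finset V) ⊆ A := by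
        intro z hz
        rcases Finset.mem_insert.mp hz with rfl | hz
        · exact hxA
        · exact (Finset.mem_singleton.mp hz) ▸ hyA
      have h2 : 2 ≤ A.card := by
        have := Finset.card_le_card hsub
        rwa [Finset.card_pair hxy] at this
      have hcard : D.card = A.card - 1 := by
        rw [hDdef, Finset.card_union_of_disjoint (Finset.disjoint_singleton_right.mpr hvA),
          Finset.card_sdiff_of_subset hsub, Finset.card_pair hxy, Finset.card_singleton]
        omega
      have hle : domNum T ≤ A.card - 1 := hcard ▸ Nat.sInf_le ⟨D, hdom, rfl⟩
      rw [hnum] at hle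
      omega
    refine ⟨?_, ?_⟩
    · intro v hvB hsup
      obtain ⟨x, hvx, hxleaf⟩ := hsup
      have hxA : x ∈ A := hadjA hvx hvB
      have hweak : IsWeakSupport T v := by
        by_contra hnw
        have hnw' : ((T.neighborFinset v).filter fun l => T.degree l = 1).card ≠ 1 := hnw
        have hxm : x ∈ (T.neighborFinset v).filter fun l => T.degree l = 1 :=
          Finset.mem_filter.mpr ⟨by simpa using hvx, hxleaf⟩
        have h1lt : 1 < ((T.neighborFinset v).filter fun l => T.degree l = 1).card := by
          have h0 : 0 < ((T.neighborFinset v).filter fun l => T.degree l = 1).card :=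
            Finset.card_pos.mpr ⟨x, hxm⟩
          omega
        obtain ⟨y, hym, hyx⟩ := Finset.exists_mem_ne h1lt x
        obtain ⟨hyn, hyleaf⟩ := Finset.mem_filter.mp hym
        have hvy : T.Adj v y := by simpa using hyn
        refine build v x y hvB hxA (hadjA hvy hvB) (fun h => hyx h.symm) hvx hvy ?_
        intro w hwB hwv
        obtain ⟨u0, hu0⟩ := hnbr w
        have hu0A : u0 ∈ A := hadjA hu0 hwB
        by_cases hx : u0 = x
        · exact absurd (leaf_eq_of_adj hxleaf (hx ▸ hu0.symm) hvx.symm) hwv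
        · by_cases hy : u0 = y
          · exact absurd (leaf_eq_of_adj hyleaf (hy ▸ hu0.symm) hvy.symm) hwv
          · exact ⟨u0, hu0.symm, hu0A, hx, hy⟩
      refine ⟨hweak, ?_⟩
      intro u hvu hul
      by_contra hus
      have huA : u ∈ A := hadjA hvu hvB
      have hux : x ≠ u := fun h => hul (h ▸ hxleaf)
      refine build v x u hvB hxA huA hux hvx hvu ?_
      intro w hwB hwv
      by_cases hex : ∃ z, T.Adj w z ∧ z ≠ x ∧ z ≠ u
      · obtain ⟨z, hz, hz1, hz2⟩ := hex
        exact ⟨z, hz.symm, hadjA hz hwB, hz1, hz2⟩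
      · exfalso
        push_neg at hex
        obtain ⟨u0, hu0⟩ := hnbr w
        have hwu : ∀ z, T.Adj w z → z = u := by
          intro z hz
          by_cases hzx : z = x
          · exact absurd (leaf_eq_of_adj hxleaf (hzx ▸ hz.symm) hvx.symm) hwv
          · exact hex z hz hzx
        have hnf : T.neighborFinset w = {u} := by
          apply Finset.eq_singleton_iff_unique_mem.mpr
          constructor
          · have := hwu u0 hu0
            simpa using (this ▸ hu0)
          · intro z hzm
            exact hwu z (by simpa using hzm)
        have hwleaf : IsLeaf T w := by
          have : T.degree w = 1 := by
            rw [← SimpleGraph.card_neighborFinset_eq_degree, hnf, Finset.card_singleton]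
          exact this
        have : T.Adj w u := (hwu u0 hu0) ▸ hu0
        exact hus ⟨w, this.symm, hwleaf⟩
    · intro x hxA y hyA hxl hxs hyl hys hd2
      have hxy : x ≠ y := by
        rintro rfl
        rw [SimpleGraph.dist_self] at hd2
        omega
      obtain ⟨p, hp⟩ := hconn.exists_walk_length_eq_dist x y
      rw [hd2] at hp
      obtain ⟨v, hxv, q, rfl⟩ :=
        SimpleGraph.Walk.not_nil_iff.mp (SimpleGraph.Walk.not_nil_of_ne (p := p) hxy)
      have hq1 : q.length = 1 := by simpa using hp
      have hvB : v ∈ B := hadjB hxv hxA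
      have hvy : v ≠ y := fun h => hnAB hyA (h ▸ hvB)
      obtain ⟨c, hvc, r, rfl⟩ :=
        SimpleGraph.Walk.not_nil_iff.mp (SimpleGraph.Walk.not_nil_of_ne (p := q) hvy)
      have hc : c = y := SimpleGraph.Walk.eq_of_length_eq_zero (by simpa using hq1)
      have hvy2 : T.Adj v y := hc ▸ hvc
      refine build v x y hvB hxA hyA hxy hxv.symm hvy2 ?_
      intro w hwB hwv
      by_cases hex : ∃ z, T.Adj w z ∧ z ≠ x ∧ z ≠ y
      · obtain ⟨z, hz, h1, h2⟩ := hex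
        exact ⟨z, hz.symm, hadjA hz hwB, h1, h2⟩
      · exfalso
        push_neg at hex
        obtain ⟨u0, hu0⟩ := hnbr w
        by_cases hwx : T.Adj w x
        · by_cases hwy : T.Adj w y
          · -- two distinct x-y paths, contradiction with acyclicity
            have hxvne : x ≠ v := fun h => hnAB hxA (h ▸ hvB)
            have hxwne : x ≠ w := fun h => hnAB hxA (h ▸ hwB)
            have hywne : w ≠ y := fun h => hnAB hyA (h ▸ hwB)
            have hp1 : (SimpleGraph.Walk.cons hxv
                (SimpleGraph.Walk.cons hvy2 SimpleGraph.Walk.nil) : T.Walk x y).IsPath := by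
              rw [SimpleGraph.Walk.isPath_def]
              simp [hxvne, hxy, hvy]
            have hp2 : (SimpleGraph.Walk.cons hwx.symm
                (SimpleGraph.Walk.cons hwy SimpleGraph.Walk.nil) : T.Walk x y).IsPath := by
              rw [SimpleGraph.Walk.isPath_def]
              simp [hxwne, hxy, hywne]
            have heq := (SimpleGraph.isAcyclic_iff_path_unique.mp htree.IsAcyclic)
              ⟨_, hp1⟩ ⟨_, hp2⟩
            have hvw : v = w := by
              have h3 := congrArg (fun P : T.Path x y => P.1.support) heq
              simpa using h3
            exact hwv hvw.symm
          · have hall : ∀ z, T.Adj w z → z = x := by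
              intro z hz
              by_cases hzx : z = x
              · exact hzx
              · exact absurd ((hex z hz hzx) ▸ hz) hwy
            have hnf : T.neighborFinset w = {x} := by
              apply Finset.eq_singleton_iff_unique_mem.mpr
              refine ⟨?_, fun z hzm => hall z (by simpa using hzm)⟩
              have := hall u0 hu0
              simpa using (this ▸ hu0)
            have hwleaf : IsLeaf T w := by
              have : T.degree w = 1 := by
                rw [← SimpleGraph.card_neighborFinset_eq_degree, hnf, Finset.card_singleton]
              exact this
            exact hxs ⟨w, hwx.symm, hwleaf⟩
        · have hall : ∀ z, T.Adj w z → z = y := by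
            intro z hz
            by_cases hzx : z = x
            · exact absurd (hzx ▸ hz) hwx
            · exact hex z hz hzx
          have hnf : T.neighborFinset w = {y} := by
            apply Finset.eq_singleton_iff_unique_mem.mpr
            refine ⟨?_, fun z hzm => hall z (by simpa using hzm)⟩
            have := hall u0 hu0
            simpa using (this ▸ hu0)
          have hwleaf : IsLeaf T w := by
            have : T.degree w = 1 := by
              rw [← SimpleGraph.card_neighborFinset_eq_degree, hnf, Finset.card_singleton]
            exact this
          have hwy : T.Adj w y := (hall u0 hu0) ▸ hu0
          exact hys ⟨w, hwy.symm, hwleaf⟩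
  · rintro ⟨hca, hcb⟩
    have hub : domNum T ≤ A.card := Nat.sInf_le ⟨A, hAdom, rfl⟩
    have hlb : A.card ≤ domNum T := by
      refine le_csInf ⟨A.card, ⟨A, hAdom, rfl⟩⟩ ?_
      rintro n ⟨D, hD, rfl⟩
      have hchoice : ∀ a : V, ∃ c : V, a ∈ A →
          ((a ∈ D → c = a) ∧
           (a ∉ D → IsSupport T a → T.Adj a c ∧ IsLeaf T c ∧ c ∈ D ∧ c ∈ B) ∧
           (a ∉ D → ¬ IsSupport T a → T.Adj c a ∧ c ∈ D ∧ c ∈ B)) := by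
        intro a
        by_cases haA : a ∈ A
        · by_cases haD : a ∈ D
          · exact ⟨a, fun _ => ⟨fun _ => rfl, fun h => absurd haD h, fun h => absurd haD h⟩⟩
          · by_cases hs : IsSupport T a
            · obtain ⟨l, hal, hl⟩ := hs
              have hlD : l ∈ D := by
                by_contra hnD
                obtain ⟨u, huD, hu⟩ := hD _ hnD
                exact haD ((leaf_eq_of_adj hl hu.symm hal.symm) ▸ huD)
              exact ⟨l, fun _ => ⟨fun h => absurd h haD,
                fun _ _ => ⟨hal, hl, hlD, hadjB hal haA⟩,
                fun _ h => absurd ⟨l, hal, hl⟩ h⟩⟩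
            · obtain ⟨u, huD, hu⟩ := hD a haD
              exact ⟨u, fun _ => ⟨fun h => absurd h haD, fun _ h => absurd h hs,
                fun _ _ => ⟨hu, huD, hadjB hu.symm haA⟩⟩⟩
        · exact ⟨a, fun h => absurd h haA⟩
      choose f hf using hchoice
      have hspec : ∀ a ∈ A, (a ∈ D ∧ f a = a) ∨
          (a ∉ D ∧ IsSupport T a ∧ T.Adj a (f a) ∧ IsLeaf T (f a) ∧ f a ∈ D ∧ f a ∈ B) ∨
          (a ∉ D ∧ ¬ IsSupport T a ∧ T.Adj (f a) a ∧ f a ∈ D ∧ f a ∈ B) := by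
        intro a haA
        obtain ⟨h1, h2, h3⟩ := hf a haA
        by_cases haD : a ∈ D
        · exact Or.inl ⟨haD, h1 haD⟩
        · by_cases hs : IsSupport T a
          · obtain ⟨c1, c2, c3, c4⟩ := h2 haD hs
            exact Or.inr (Or.inl ⟨haD, hs, c1, c2, c3, c4⟩)
          · obtain ⟨c1, c2, c3⟩ := h3 haD hs
            exact Or.inr (Or.inr ⟨haD, hs, c1, c2, c3⟩)
      apply Finset.card_le_card_of_injOn f
      · intro a haA
        rcases hspec a haA with ⟨h1, h2⟩ | ⟨_, _, _, _, h, _⟩ | ⟨_, _, _, h, _⟩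
        · rw [h2]; exact h1
        · exact h
        · exact h
      · intro a haA a' haA' heq
        simp only [Finset.mem_coe] at haA haA'
        rcases hspec a haA with ⟨hD1, he1⟩ | ⟨hnD1, hs1, hadj1, hlf1, _, hB1⟩ |
            ⟨hnD1, hs1, hadj1, _, hB1⟩ <;>
          rcases hspec a' haA' with ⟨hD2, he2⟩ | ⟨hnD2, hs2, hadj2, hlf2, _, hB2⟩ |
            ⟨hnD2, hs2, hadj2, _, hB2⟩
        · exact he1.symm.trans (heq.trans he2)
        · exfalso
          have : a ∈ B := by rw [← he1, heq]; exact hB2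
          exact hnAB haA this
        · exfalso
          have : a ∈ B := by rw [← he1, heq]; exact hB2
          exact hnAB haA this
        · exfalso
          have : a' ∈ B := by rw [← he2, ← heq]; exact hB1
          exact hnAB haA' this
        · exact leaf_eq_of_adj hlf1 hadj1.symm (heq ▸ hadj2.symm)
        · have hadj2' : T.Adj (f a) a' := by rw [heq]; exact hadj2
          exact leaf_eq_of_adj hlf1 hadj1.symm hadj2'
        · exfalso
          have : a' ∈ B := by rw [← he2, ← heq]; exact hB1
          exact hnAB haA' this
        · have hadj1' : T.Adj (f a') a := by rw [← heq]; exact hadj1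
          exact leaf_eq_of_adj hlf2 hadj1' hadj2.symm
        · by_cases haa : a = a'
          · exact haa
          · exfalso
            have hba' : T.Adj (f a) a' := by rw [heq]; exact hadj2
            have hba : T.Adj (f a) a := hadj1
            by_cases hl1 : IsLeaf T a
            · obtain ⟨hweak, hnbrs⟩ := hca (f a) hB1 ⟨a, hba, hl1⟩
              by_cases hl2 : IsLeaf T a'
              · have h1 : a ∈ (T.neighborFinset (f a)).filter fun l => T.degree l = 1 :=
                  Finset.mem_filter.mpr ⟨by simpa using hba, hl1⟩
                have h2 : a' ∈ (T.neighborFinset (f a)).filter fun l => T.degree l = 1 :=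
                  Finset.mem_filter.mpr ⟨by simpa using hba', hl2⟩
                have hsub : ({a, a'} : Finset V) ⊆
                    (T.neighborFinset (f a)).filter fun l => T.degree l = 1 := by
                  intro z hz
                  rcases Finset.mem_insert.mp hz with rfl | hz
                  · exact h1
                  · exact (Finset.mem_singleton.mp hz) ▸ h2
                have hle := Finset.card_le_card hsub
                rw [Finset.card_pair haa] at hle
                have hw1 : ((T.neighborFinset (f a)).filter
                    fun l => T.degree l = 1).card = 1 := hweak
                omega
              · exact hs2 (hnbrs a' hba' hl2)
            · by_cases hl2 : IsLeaf T a'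
              · obtain ⟨_, hnbrs⟩ := hca (f a) hB1 ⟨a', hba', hl2⟩
                exact hs1 (hnbrs a hba hl1)
              · have hnadj : ¬ T.Adj a a' := hnadjAA haA haA'
                have hdle : T.dist a a' ≤ 2 := by
                  have := SimpleGraph.dist_le (SimpleGraph.Walk.cons hba.symm
                    (SimpleGraph.Walk.cons hba' SimpleGraph.Walk.nil) : T.Walk a a')
                  simpa using this
                have hdpos : 0 < T.dist a a' := hconn.pos_dist_of_ne haa
                have hd1 : T.dist a a' ≠ 1 := fun h =>
                  hnadj (SimpleGraph.dist_eq_one_iff_adj.mp h)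
                exact hcb a haA a' haA' hl1 hs1 hl2 hs2 (by omega)
    omega
end

section
/- Let T' be a tree with bipartition (A',B'), |A'| ≤ |B'|, and γ(T') = |A'|. Let T be obtained from T' by adding a new vertex b adjacent to a vertex a' ∈ A'. Then γ(T) = |A'|, so the domination number of T equals the size of its smaller partite set A'. -/
open Finset

variable {V : Type} [Fintype V] [DecidableEq V]

/-- The tree obtained from `T'` by adding a new vertex (the unique element of `Unit`)
joined to the vertex `a'`. -/
def addLeaf (T' : SimpleGraph V) (a' : V) : SimpleGraph (V ⊕ Unit) where
  Adj x y :=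
    match x, y with
    | Sum.inl u, Sum.inl v => T'.Adj u v
    | Sum.inl u, Sum.inr _ => u = a'
    | Sum.inr _, Sum.inl v => v = a'
    | Sum.inr _, Sum.inr _ => False
  symm := by
    constructor
    intro x y h
    cases x <;> cases y <;> simp_all <;> exact h.symm
  loopless := by
    constructor
    intro x
    cases x <;> simp

lemma domSet_univ' {W : Type} [Fintype W] [DecidableEq W] (G : SimpleGraph W) :
    IsDomSet G (Finset.univ : Finset W) := fun v hv => absurd (mem_univ v) hv

lemma domNum_le' {W : Type} [Fintype W] [DecidableEq W] {G : SimpleGraph W} {D : Finset W}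
    (hD : IsDomSet G D) : domNum G ≤ D.card :=
  Nat.sInf_le ⟨D, hD, rfl⟩

theorem operation_O1 (T' : SimpleGraph V) (A' B' : Finset V) (a' : V)
    (htree : T'.IsTree) (hbip : IsBipartition T' A' B') (hAB : A'.card ≤ B'.card)
    (ha' : a' ∈ A') (hdom : domNum T' = A'.card) :
    domNum (addLeaf T' a') = A'.card := by
  obtain ⟨hunion, hdisj, hedge⟩ := hbip
  apply le_antisymm
  · -- upper bound: A' (via inl) dominates addLeaf
    have hkey : IsDomSet (addLeaf T' a') (A'.image Sum.inl) := by
      intro v hv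
      cases v with
      | inl u =>
        have hu : u ∉ A' := fun h => hv (mem_image_of_mem _ h)
        have hua : u ≠ a' := fun h => hu (h ▸ ha')
        -- u has a neighbor in A'
        obtain ⟨p⟩ := htree.isConnected.preconnected u a'
        cases p with
        | nil => exact absurd rfl hua
        | cons hadj _ =>
          rename_i w _
          have hw : w ∈ A' := by
            rcases hedge hadj with ⟨h1, _⟩ | ⟨_, h2⟩
            · exact absurd h1 hu
            · exact h2
          exact ⟨Sum.inl w, mem_image_of_mem _ hw, hadj.symm⟩
      | inr b =>
        exact ⟨Sum.inl a', mem_image_of_mem _ ha', rfl⟩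
    calc domNum (addLeaf T' a') ≤ (A'.image Sum.inl).card := domNum_le' hkey
      _ = A'.card := Finset.card_image_of_injective _ Sum.inl_injective
  · -- lower bound
    rw [← hdom]
    have hne : domNum (addLeaf T' a') ∈
        {n | ∃ D : Finset (V ⊕ Unit), IsDomSet (addLeaf T' a') D ∧ D.card = n} :=
      Nat.sInf_mem ⟨_, Finset.univ, domSet_univ' _, rfl⟩
    obtain ⟨D, hD, hcard⟩ := hne
    set f : V ⊕ Unit → V := Sum.elim id (fun _ => a') with hf
    have hkey : IsDomSet T' (D.image f) := by
      intro v hv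
      have hvD : Sum.inl v ∉ D := fun h => hv (by simpa [hf] using mem_image_of_mem f h)
      obtain ⟨u, huD, hadj⟩ := hD (Sum.inl v) hvD
      cases u with
      | inl w => exact ⟨w, by simpa [hf] using mem_image_of_mem f huD, hadj⟩
      | inr b =>
        exfalso
        have : (addLeaf T' a').Adj (Sum.inr b) (Sum.inl v) := hadj
        have hva : v = a' := this
        exact hv (hva ▸ (by simpa [hf] using mem_image_of_mem f huD))
    calc domNum T' ≤ (D.image f).card := domNum_le' hkey
      _ ≤ D.card := Finset.card_image_le
      _ = domNum (addLeaf T' a') := hcard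
end

section
/- Let T' be a tree with bipartition (A',B'), |A'| ≤ |B'|, γ(T') = |A'|, and let a' ∈ A' be a support vertex of T'. Let T be obtained from T' by adding two new vertices a and b with edges ab and ba'. Then γ(T) = |A'| + 1, which equals the size of the smaller partite set A' ∪ {a} of T. -/
open Finset

variable {V : Type} [Fintype V] [DecidableEq V]

/-- The tree obtained from `T'` by adding two new vertices `a = Sum.inr true` and
`b = Sum.inr false`, with edges `ab` and `b a'`. -/
def attachP2atSupport (T' : SimpleGraph V) (a' : V) : SimpleGraph (V ⊕ Bool) where
  Adj x y :=
    match x, y with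
    | Sum.inl u, Sum.inl v => T'.Adj u v
    | Sum.inl u, Sum.inr c => c = false ∧ u = a'
    | Sum.inr c, Sum.inl v => c = false ∧ v = a'
    | Sum.inr c, Sum.inr d => c ≠ d
  symm := by
    constructor
    intro x y h
    cases x <;> cases y <;> simp_all
    · exact h.symm
    · exact Ne.symm h
  loopless := by
    constructor
    intro x
    cases x <;> simp

lemma domSet_nonempty (G : SimpleGraph V) :
    {n | ∃ D : Finset V, IsDomSet G D ∧ D.card = n}.Nonempty :=
  ⟨Finset.univ.card, Finset.univ, fun v hv => absurd (Finset.mem_univ v) hv, rfl⟩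

lemma adj_inl_inl (T' : SimpleGraph V) (a' : V) (u v : V) :
    (attachP2atSupport T' a').Adj (Sum.inl u) (Sum.inl v) ↔ T'.Adj u v := Iff.rfl

lemma adj_inl_inr (T' : SimpleGraph V) (a' : V) (u : V) (c : Bool) :
    (attachP2atSupport T' a').Adj (Sum.inl u) (Sum.inr c) ↔ c = false ∧ u = a' := Iff.rfl

lemma adj_inr_inl (T' : SimpleGraph V) (a' : V) (c : Bool) (v : V) :
    (attachP2atSupport T' a').Adj (Sum.inr c) (Sum.inl v) ↔ c = false ∧ v = a' := Iff.rfl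

lemma adj_inr_inr (T' : SimpleGraph V) (a' : V) (c d : Bool) :
    (attachP2atSupport T' a').Adj (Sum.inr c) (Sum.inr d) ↔ c ≠ d := Iff.rfl

theorem operation_O3 (T' : SimpleGraph V) [DecidableRel T'.Adj] (A' B' : Finset V) (a' : V)
    (htree : T'.IsTree) (hbip : IsBipartition T' A' B') (hAB : A'.card ≤ B'.card)
    (ha' : a' ∈ A') (hsupp : IsSupport T' a') (hdom : domNum T' = A'.card) :
    domNum (attachP2atSupport T' a') = A'.card + 1 := by
  classical
  set T := attachP2atSupport T' a' with hT
  -- optimal dominating set of T'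
  have h1 : ∃ D : Finset V, IsDomSet T' D ∧ D.card = domNum T' :=
    Nat.sInf_mem (domSet_nonempty T')
  obtain ⟨D', hdom', hc'⟩ := h1
  -- Upper bound
  have hub : domNum T ≤ A'.card + 1 := by
    apply Nat.sInf_le
    refine ⟨D'.image Sum.inl ∪ {Sum.inr false}, ?_, ?_⟩
    · intro v hv
      match v with
      | Sum.inl v =>
        have hv' : v ∉ D' := fun h => hv (mem_union_left _ (mem_image_of_mem _ h))
        obtain ⟨u, hu, hadj⟩ := hdom' v hv'
        exact ⟨Sum.inl u, mem_union_left _ (mem_image_of_mem _ hu), hadj⟩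
      | Sum.inr true =>
        refine ⟨Sum.inr false, mem_union_right _ (mem_singleton_self _), ?_⟩
        rw [hT, adj_inr_inr]; simp
      | Sum.inr false =>
        exact absurd (mem_union_right _ (mem_singleton_self _)) hv
    · rw [card_union_of_disjoint (by simp), card_image_of_injective _ Sum.inl_injective,
        card_singleton, hc', hdom]
  -- optimal dominating set of T
  have h2 : ∃ D : Finset (V ⊕ Bool), IsDomSet T D ∧ D.card = domNum T :=
    Nat.sInf_mem (domSet_nonempty T)
  obtain ⟨D, hDdom, hDc⟩ := h2
  -- the leaf attached to a'
  obtain ⟨ℓ, hadjℓ, hdegℓ⟩ := hsupp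
  have hℓne : ℓ ≠ a' := fun h => T'.loopless.irrefl a' (h ▸ hadjℓ)
  have hnbr : ∀ v, T'.Adj ℓ v → v = a' := by
    intro v hv
    have hcard : (T'.neighborFinset ℓ).card = 1 := hdegℓ
    obtain ⟨x, hx⟩ := Finset.card_eq_one.mp hcard
    have ha : a' ∈ T'.neighborFinset ℓ := by
      rw [SimpleGraph.mem_neighborFinset]; exact hadjℓ.symm
    have hvmem : v ∈ T'.neighborFinset ℓ := by
      rw [SimpleGraph.mem_neighborFinset]; exact hv
    rw [hx, mem_singleton] at ha hvmem
    rw [hvmem, ha]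
  set P : Finset V := Finset.univ.filter (fun v => Sum.inl v ∈ D) with hP
  have hmemP : ∀ v : V, v ∈ P ↔ Sum.inl v ∈ D := by
    intro v; simp [hP]
  -- D contains some inr vertex
  have hinr : ∃ c, Sum.inr c ∈ D := by
    by_cases h : Sum.inr true ∈ D
    · exact ⟨true, h⟩
    · obtain ⟨u, hu, hadj⟩ := hDdom (Sum.inr true) h
      match u with
      | Sum.inl u =>
        rw [hT, adj_inl_inr] at hadj
        exact absurd hadj.1 (by simp)
      | Sum.inr c => exact ⟨c, hu⟩
  obtain ⟨c, hc⟩ := hinr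
  have hPcard : P.card + 1 ≤ domNum T := by
    have hsub : P.image Sum.inl ∪ {Sum.inr c} ⊆ D := by
      intro x hx
      rcases mem_union.mp hx with hx | hx
      · obtain ⟨v, hv, rfl⟩ := mem_image.mp hx
        exact (hmemP v).mp hv
      · rw [mem_singleton] at hx; exact hx ▸ hc
    have := card_le_card hsub
    rw [card_union_of_disjoint (by simp), card_image_of_injective _ Sum.inl_injective,
      card_singleton, hDc] at this
    exact this
  -- construct a dominating set of T' of size ≤ domNum T - 1
  have hkey : ∃ D'' : Finset V, IsDomSet T' D'' ∧ D''.card ≤ P.card := by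
    by_cases hℓP : ℓ ∈ P
    · refine ⟨(P.erase ℓ) ∪ {a'}, ?_, ?_⟩
      · intro v hv
        have hva : v ≠ a' := fun h => hv (mem_union_right _ (h ▸ mem_singleton_self a'))
        by_cases hvℓ : v = ℓ
        · exact ⟨a', mem_union_right _ (mem_singleton_self a'), hvℓ ▸ hadjℓ⟩
        · have hvP : v ∉ P := fun h =>
            hv (mem_union_left _ (mem_erase.mpr ⟨hvℓ, h⟩))
          have hvD : Sum.inl v ∉ D := fun h => hvP ((hmemP v).mpr h)
          obtain ⟨u, hu, hadj⟩ := hDdom (Sum.inl v) hvD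
          match u with
          | Sum.inl u =>
            rw [hT, adj_inl_inl] at hadj
            have huP : u ∈ P := (hmemP u).mpr hu
            have huℓ : u ≠ ℓ := fun h => hva (hnbr v (h ▸ hadj))
            exact ⟨u, mem_union_left _ (mem_erase.mpr ⟨huℓ, huP⟩), hadj⟩
          | Sum.inr d =>
            rw [hT, adj_inr_inl] at hadj
            exact absurd hadj.2 hva
      · calc ((P.erase ℓ) ∪ {a'}).card ≤ (P.erase ℓ).card + 1 := by
              simpa using card_union_le (P.erase ℓ) {a'}
          _ = P.card - 1 + 1 := by rw [card_erase_of_mem hℓP]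
          _ ≤ P.card := by
              have : 1 ≤ P.card := card_pos.mpr ⟨ℓ, hℓP⟩
              omega
    · -- ℓ ∉ P : then a' ∈ P and P itself dominates T'
      have ha'P : a' ∈ P := by
        have hℓD : Sum.inl ℓ ∉ D := fun h => hℓP ((hmemP ℓ).mpr h)
        obtain ⟨u, hu, hadj⟩ := hDdom (Sum.inl ℓ) hℓD
        match u with
        | Sum.inl u =>
          rw [hT, adj_inl_inl] at hadj
          have : u = a' := hnbr u hadj.symm
          exact (hmemP a').mpr (this ▸ hu)
        | Sum.inr d =>
          rw [hT, adj_inr_inl] at hadj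
          exact absurd hadj.2 hℓne
      refine ⟨P, ?_, le_refl _⟩
      intro v hv
      have hvD : Sum.inl v ∉ D := fun h => hv ((hmemP v).mpr h)
      obtain ⟨u, hu, hadj⟩ := hDdom (Sum.inl v) hvD
      match u with
      | Sum.inl u =>
        rw [hT, adj_inl_inl] at hadj
        exact ⟨u, (hmemP u).mpr hu, hadj⟩
      | Sum.inr d =>
        rw [hT, adj_inr_inl] at hadj
        exact absurd (hadj.2 ▸ ha'P) hv
  obtain ⟨D'', hdom'', hcard''⟩ := hkey
  have hlb : domNum T' ≤ D''.card := Nat.sInf_le ⟨D'', hdom'', rfl⟩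
  rw [hdom] at hlb
  omega
end

section
/- A vertex v of a graph G without isolated vertices satisfies γ(G − v) < γ(G) if and only if there exists a minimum dominating set D of G containing v whose private neighborhood satisfies PN[v,D] = {v}. -/
open Finset

variable {V : Type} [Fintype V] [DecidableEq V]

/-- The closed neighborhood of `v` as a `Finset`. -/
def closedNbhd (G : SimpleGraph V) [DecidableRel G.Adj] (v : V) : Finset V :=
  insert v (G.neighborFinset v)

lemma exists_min_domset (G : SimpleGraph V) :
    ∃ D : Finset V, IsDomSet G D ∧ D.card = domNum G := by
  have hne : {n | ∃ D : Finset V, IsDomSet G D ∧ D.card = n}.Nonempty :=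
    ⟨Finset.univ.card, Finset.univ, fun w hw => absurd (mem_univ w) hw, rfl⟩
  obtain ⟨D, hD, hc⟩ := Nat.sInf_mem hne
  exact ⟨D, hD, hc⟩

lemma domNum_le_card (G : SimpleGraph V) {D : Finset V} (hD : IsDomSet G D) :
    domNum G ≤ D.card :=
  Nat.sInf_le ⟨D, hD, rfl⟩

theorem gamma_critical_iff_private_neighborhood (G : SimpleGraph V) [DecidableRel G.Adj]
    (hniso : ∀ u : V, 0 < G.degree u) (v : V) :
    domNum (G.induce ↑(Finset.univ.erase v)) < domNum G ↔
      ∃ D : Finset V, IsDomSet G D ∧ D.card = domNum G ∧ v ∈ D ∧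
        closedNbhd G v \ (D.erase v).biUnion (fun u => closedNbhd G u) = {v} := by
  set S : Set V := ↑(Finset.univ.erase v) with hS
  have hmemS : ∀ w : V, w ∈ S ↔ w ≠ v := by
    intro w; simp [hS]
  constructor
  · intro hlt
    obtain ⟨D', hD', hcard'⟩ := exists_min_domset (G.induce S)
    set D0 : Finset V := D'.map ⟨Subtype.val, Subtype.val_injective⟩ with hD0
    have hD0mem : ∀ w : V, w ∈ D0 ↔ ∃ x ∈ D', (x : V) = w := by
      intro w; simp [hD0]
    have hvD0 : v ∉ D0 := by
      rw [hD0mem]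
      rintro ⟨x, _, hx⟩
      exact ((hmemS _).mp x.2) hx
    by_cases hdomv : ∃ u ∈ D', G.Adj (↑u) v
    · exfalso
      have hdom : IsDomSet G D0 := by
        intro w hw
        by_cases hwv : w = v
        · obtain ⟨u, hu, hadj⟩ := hdomv
          exact ⟨u, (hD0mem _).mpr ⟨u, hu, rfl⟩, hwv ▸ hadj⟩
        · have hw' : (⟨w, (hmemS w).mpr hwv⟩ : S) ∉ D' := by
            intro h
            exact hw ((hD0mem _).mpr ⟨_, h, rfl⟩)
          obtain ⟨u, hu, hadj⟩ := hD' _ hw'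
          exact ⟨u, (hD0mem _).mpr ⟨u, hu, rfl⟩, hadj⟩
      have h1 := domNum_le_card G hdom
      have h2 : D0.card = D'.card := Finset.card_map _
      omega
    · refine ⟨insert v D0, ?_, ?_, mem_insert_self _ _, ?_⟩
      · -- dominating
        intro w hw
        have hwv : w ≠ v := fun h => hw (h ▸ mem_insert_self _ _)
        have hwD0 : w ∉ D0 := fun h => hw (mem_insert_of_mem h)
        have hw' : (⟨w, (hmemS w).mpr hwv⟩ : S) ∉ D' := by
          intro h
          exact hwD0 ((hD0mem _).mpr ⟨_, h, rfl⟩)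
        obtain ⟨u, hu, hadj⟩ := hD' _ hw'
        exact ⟨u, mem_insert_of_mem ((hD0mem _).mpr ⟨u, hu, rfl⟩), hadj⟩
      · -- cardinality
        have hdom : IsDomSet G (insert v D0) := by
          intro w hw
          have hwv : w ≠ v := fun h => hw (h ▸ mem_insert_self _ _)
          have hwD0 : w ∉ D0 := fun h => hw (mem_insert_of_mem h)
          have hw' : (⟨w, (hmemS w).mpr hwv⟩ : S) ∉ D' := by
            intro h
            exact hwD0 ((hD0mem _).mpr ⟨_, h, rfl⟩)
          obtain ⟨u, hu, hadj⟩ := hD' _ hw'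
          exact ⟨u, mem_insert_of_mem ((hD0mem _).mpr ⟨u, hu, rfl⟩), hadj⟩
        have h1 := domNum_le_card G hdom
        have h2 : (insert v D0).card = D0.card + 1 := Finset.card_insert_of_notMem hvD0
        have h3 : D0.card = D'.card := Finset.card_map _
        omega
      · -- private neighborhood
        have herase : (insert v D0).erase v = D0 := Finset.erase_insert hvD0
        rw [herase]
        ext w
        simp only [Finset.mem_sdiff, Finset.mem_biUnion, Finset.mem_singleton]
        constructor
        · rintro ⟨hwcl, hwpr⟩
          by_contra hwv
          have hadjvw : G.Adj v w := by
            rcases Finset.mem_insert.mp hwcl with h | h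
            · exact absurd h hwv
            · exact (G.mem_neighborFinset v w).mp h
          by_cases hwD0 : w ∈ D0
          · exact hwpr ⟨w, hwD0, mem_insert_self _ _⟩
          · have hw' : (⟨w, (hmemS w).mpr hwv⟩ : S) ∉ D' := by
              intro h
              exact hwD0 ((hD0mem _).mpr ⟨_, h, rfl⟩)
            obtain ⟨u, hu, hadj⟩ := hD' _ hw'
            refine hwpr ⟨u, (hD0mem _).mpr ⟨u, hu, rfl⟩, ?_⟩
            exact mem_insert_of_mem ((G.mem_neighborFinset _ _).mpr hadj)
        · rintro rfl
          refine ⟨mem_insert_self _ _, ?_⟩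
          rintro ⟨u, huD0, hucl⟩
          obtain ⟨x, hx, hxu⟩ := (hD0mem u).mp huD0
          rcases Finset.mem_insert.mp hucl with h | h
          · exact ((hmemS _).mp x.2) (hxu.trans h.symm)
          · exact hdomv ⟨x, hx, hxu ▸ (G.mem_neighborFinset u w).mp h⟩
  · rintro ⟨D, hD, hcard, hvD, hPN⟩
    classical
    have hPN' : ∀ w, w ∈ closedNbhd G v → w ≠ v →
        ∃ u ∈ D.erase v, w ∈ closedNbhd G u := by
      intro w hw hwv
      by_contra h
      have : w ∈ closedNbhd G v \ (D.erase v).biUnion (fun u => closedNbhd G u) := by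
        rw [Finset.mem_sdiff]
        refine ⟨hw, ?_⟩
        rw [Finset.mem_biUnion]
        push_neg at h ⊢
        exact h
      rw [hPN] at this
      exact hwv (Finset.mem_singleton.mp this)
    set D'' : Finset S := Finset.univ.filter (fun x : S => (x : V) ∈ D) with hD''
    have hmemD'' : ∀ x : S, x ∈ D'' ↔ (x : V) ∈ D := by
      intro x; simp [hD'']
    have hdom'' : IsDomSet (G.induce S) D'' := by
      intro w hw
      have hwv : (w : V) ≠ v := (hmemS _).mp w.2
      have hwD : (w : V) ∉ D := fun h => hw ((hmemD'' w).mpr h)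
      obtain ⟨u, hu, hadj⟩ := hD (w : V) hwD
      by_cases huv : u = v
      · rw [huv] at hadj
        have hwcl : (w : V) ∈ closedNbhd G v :=
          mem_insert_of_mem ((G.mem_neighborFinset _ _).mpr hadj)
        obtain ⟨u', hu', hwcl'⟩ := hPN' (w : V) hwcl hwv
        have hu'v : u' ≠ v := (Finset.mem_erase.mp hu').1
        have hu'D : u' ∈ D := (Finset.mem_erase.mp hu').2
        rcases Finset.mem_insert.mp hwcl' with h | h
        · exact absurd (h ▸ hu'D) hwD
        · exact ⟨⟨u', (hmemS u').mpr hu'v⟩, (hmemD'' _).mpr hu'D,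
            (G.mem_neighborFinset _ _).mp h⟩
      · exact ⟨⟨u, (hmemS u).mpr huv⟩, (hmemD'' _).mpr hu, hadj⟩
    have hle := domNum_le_card (G.induce S) hdom''
    have hcard'' : D''.card = (D.erase v).card := by
      rw [← Finset.card_map ⟨Subtype.val, Subtype.val_injective⟩ (s := D'')]
      congr 1
      ext w
      simp only [Finset.mem_map, Finset.mem_erase, Function.Embedding.coeFn_mk]
      constructor
      · rintro ⟨x, hx, rfl⟩
        exact ⟨(hmemS _).mp x.2, (hmemD'' x).mp hx⟩
      · rintro ⟨hwv, hwD⟩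
        exact ⟨⟨w, (hmemS w).mpr hwv⟩, (hmemD'' _).mpr hwD, rfl⟩
    have hDe : (D.erase v).card = D.card - 1 := Finset.card_erase_of_mem hvD
    have hDpos : 0 < D.card := Finset.card_pos.mpr ⟨v, hvD⟩
    omega
end

section
/- Let (A,B) be the bipartition of the intersection graph G of a grid (a family of vertical and horizontal segments in the plane, pairwise-collinear ones disjoint, with connected union), where A consists of the vertical and B of the horizontal segments. If G has no leaves and for every two distinct x, y ∈ A with a common neighbor there exists z ∈ B with N(z) = {x,y}, then every vertex in B has degree at most 4. -/
open Finset

variable {V : Type} [Fintype V] [DecidableEq V]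

/-- An axis-parallel nondegenerate closed line segment in the plane. -/
structure GridSeg where
  a : ℝ × ℝ
  b : ℝ × ℝ
  ne : a ≠ b
  aligned : a.1 = b.1 ∨ a.2 = b.2

/-- The set of points of a segment. -/
def GridSeg.toSet (s : GridSeg) : Set (ℝ × ℝ) := segment ℝ s.a s.b

def GridSeg.Vertical (s : GridSeg) : Prop := s.a.1 = s.b.1

def GridSeg.Horizontal (s : GridSeg) : Prop := s.a.2 = s.b.2

/-- A family of segments is a grid if the segments are distinct (as point sets),
there are at least two of them, collinear segments are disjoint,
and the union of all segments is a connected subset of the plane. -/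
def IsGrid {ι : Type} [Fintype ι] (f : ι → GridSeg) : Prop :=
  (∀ i j, (f i).toSet = (f j).toSet → i = j) ∧
  2 ≤ Fintype.card ι ∧
  (∀ i j, i ≠ j → Collinear ℝ ((f i).toSet ∪ (f j).toSet) →
    Disjoint (f i).toSet (f j).toSet) ∧
  IsConnected (⋃ i, (f i).toSet)

/-- The intersection graph of a family of segments. -/
def gridGraph {ι : Type} (f : ι → GridSeg) : SimpleGraph ι where
  Adj i j := i ≠ j ∧ ((f i).toSet ∩ (f j).toSet).Nonempty
  symm := by
    constructor
    intro i j h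
    exact ⟨h.1.symm, by rw [Set.inter_comm]; exact h.2⟩
  loopless := by
    constructor
    intro i h
    exact h.1 rfl


lemma vertical_toSet {s : GridSeg} (hv : s.Vertical) :
    s.toSet = {s.a.1} ×ˢ Set.uIcc s.a.2 s.b.2 := by
  rw [← segment_eq_uIcc]
  ext p
  simp only [GridSeg.toSet, segment, Set.mem_setOf_eq, Set.mem_prod, Set.mem_singleton_iff]
  constructor
  · rintro ⟨u, v, hu, hv', huv, rfl⟩
    refine ⟨?_, u, v, hu, hv', huv, rfl⟩
    show u * s.a.1 + v * s.b.1 = s.a.1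
    rw [← hv]; linear_combination s.a.1 * huv
  · rintro ⟨h1, u, v, hu, hv', huv, h2⟩
    refine ⟨u, v, hu, hv', huv, ?_⟩
    ext
    · show u * s.a.1 + v * s.b.1 = p.1
      rw [← hv, h1]; linear_combination s.a.1 * huv
    · exact h2

lemma horizontal_toSet {s : GridSeg} (hh : s.Horizontal) :
    s.toSet = Set.uIcc s.a.1 s.b.1 ×ˢ {s.a.2} := by
  rw [← segment_eq_uIcc]
  ext p
  simp only [GridSeg.toSet, segment, Set.mem_setOf_eq, Set.mem_prod, Set.mem_singleton_iff]
  constructor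
  · rintro ⟨u, v, hu, hv', huv, rfl⟩
    refine ⟨⟨u, v, hu, hv', huv, rfl⟩, ?_⟩
    show u * s.a.2 + v * s.b.2 = s.a.2
    rw [← hh]; linear_combination s.a.2 * huv
  · rintro ⟨⟨u, v, hu, hv', huv, h2⟩, h1⟩
    refine ⟨u, v, hu, hv', huv, ?_⟩
    ext
    · exact h2
    · show u * s.a.2 + v * s.b.2 = p.2
      rw [← hh, h1]; linear_combination s.a.2 * huv

lemma not_vert_horiz {s : GridSeg} (hv : s.Vertical) (hh : s.Horizontal) : False :=
  s.ne (Prod.ext hv hh)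

lemma horiz_vert_inter {s t : GridSeg} (hh : s.Horizontal) (hv : t.Vertical) :
    (s.toSet ∩ t.toSet).Nonempty ↔
      t.a.1 ∈ Set.uIcc s.a.1 s.b.1 ∧ s.a.2 ∈ Set.uIcc t.a.2 t.b.2 := by
  rw [horizontal_toSet hh, vertical_toSet hv]
  constructor
  · rintro ⟨p, ⟨hp1, hp2⟩, hq1, hq2⟩
    simp only [Set.mem_singleton_iff] at hp2 hq1
    exact ⟨hq1 ▸ hp1, hp2 ▸ hq2⟩
  · rintro ⟨h1, h2⟩
    exact ⟨(t.a.1, s.a.2), ⟨h1, rfl⟩, rfl, h2⟩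

lemma collinear_horiz {S : Set (ℝ × ℝ)} {h : ℝ} (hS : ∀ p ∈ S, p.2 = h) :
    Collinear ℝ S := by
  rw [collinear_iff_exists_forall_eq_smul_vadd]
  refine ⟨((0 : ℝ), h), ((1 : ℝ), (0 : ℝ)), fun p hp => ⟨p.1, ?_⟩⟩
  have := hS p hp
  ext <;> simp [this]

lemma collinear_vert {S : Set (ℝ × ℝ)} {c : ℝ} (hS : ∀ p ∈ S, p.1 = c) :
    Collinear ℝ S := by
  rw [collinear_iff_exists_forall_eq_smul_vadd]
  refine ⟨(c, (0 : ℝ)), ((0 : ℝ), (1 : ℝ)), fun p hp => ⟨p.2, ?_⟩⟩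
  have := hS p hp
  ext <;> simp [this]

section GridLemmas
variable {ι : Type} [Fintype ι] {f : ι → GridSeg}

lemma horiz_horiz_disj (hgrid : IsGrid f) {i j : ι} (hij : i ≠ j)
    (hi : (f i).Horizontal) (hj : (f j).Horizontal) :
    ¬ ((f i).toSet ∩ (f j).toSet).Nonempty := by
  rintro ⟨p, hpi, hpj⟩
  have hcol : Collinear ℝ ((f i).toSet ∪ (f j).toSet) := by
    apply collinear_horiz (h := p.2)
    rintro q (hq | hq)
    · rw [horizontal_toSet hi] at hq hpi
      rw [hq.2, ← hpi.2]
    · rw [horizontal_toSet hj] at hq hpj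
      rw [hq.2, ← hpj.2]
  exact Set.disjoint_left.mp (hgrid.2.2.1 i j hij hcol) hpi hpj

lemma vert_vert_disj (hgrid : IsGrid f) {i j : ι} (hij : i ≠ j)
    (hi : (f i).Vertical) (hj : (f j).Vertical) :
    ¬ ((f i).toSet ∩ (f j).toSet).Nonempty := by
  rintro ⟨p, hpi, hpj⟩
  have hcol : Collinear ℝ ((f i).toSet ∪ (f j).toSet) := by
    apply collinear_vert (c := p.1)
    rintro q (hq | hq)
    · rw [vertical_toSet hi] at hq hpi
      rw [hq.1, ← hpi.1]
    · rw [vertical_toSet hj] at hq hpj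
      rw [hq.1, ← hpj.1]
  exact Set.disjoint_left.mp (hgrid.2.2.1 i j hij hcol) hpi hpj

/-- Adjacency between a horizontal and a vertical segment in the grid graph. -/
lemma adj_horiz_vert {z x : ι} (hz : (f z).Horizontal) (hx : (f x).Vertical) :
    (gridGraph f).Adj z x ↔
      ((f x).a.1 ∈ Set.uIcc (f z).a.1 (f z).b.1 ∧
        (f z).a.2 ∈ Set.uIcc (f x).a.2 (f x).b.2) := by
  have hne : z ≠ x := by
    rintro rfl
    exact not_vert_horiz hx hz
  constructor
  · rintro ⟨-, hinter⟩
    exact (horiz_vert_inter hz hx).mp hinter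
  · intro h
    exact ⟨hne, (horiz_vert_inter hz hx).mpr h⟩

end GridLemmas
theorem grid_horizontal_degree_le_four {ι : Type} [Fintype ι] (f : ι → GridSeg)
    (hgrid : IsGrid f)
    (hleafless : ∀ v : ι, ((gridGraph f).neighborSet v).ncard ≠ 1)
    (hpair : ∀ x y : ι, (f x).Vertical → (f y).Vertical → x ≠ y →
      (∃ w, (gridGraph f).Adj x w ∧ (gridGraph f).Adj y w) →
      ∃ z, (f z).Horizontal ∧ (gridGraph f).neighborSet z = {x, y}) :
    ∀ b : ι, (f b).Horizontal → ((gridGraph f).neighborSet b).ncard ≤ 4 := by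
  classical
  intro b hb
  by_contra hcon
  push_neg at hcon
  have hcard : 5 ≤ ((gridGraph f).neighborSet b).ncard := hcon
  set N := (gridGraph f).neighborSet b with hN
  -- every neighbor of b is vertical
  have hvert : ∀ x ∈ N, (f x).Vertical := by
    intro x hx
    rcases (f x).aligned with h | h
    · exact h
    · exact absurd hx.2 (horiz_horiz_disj hgrid hx.1 hb h)
  -- each neighbor meets b, giving interval memberships
  have hKb : ∀ x ∈ N, (f x).a.1 ∈ Set.uIcc (f b).a.1 (f b).b.1 := by
    intro x hx
    exact ((adj_horiz_vert hb (hvert x hx)).mp hx).1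
  have hJ : ∀ x ∈ N, (f b).a.2 ∈ Set.uIcc (f x).a.2 (f x).b.2 := by
    intro x hx
    exact ((adj_horiz_vert hb (hvert x hx)).mp hx).2
  -- x-coordinates of distinct neighbors are distinct
  have hinj : Set.InjOn (fun i => (f i).a.1) N := by
    intro x hx y hy hxy
    by_contra hne
    apply vert_vert_disj hgrid hne (hvert x hx) (hvert y hy)
    refine ⟨((f x).a.1, (f b).a.2), ?_, ?_⟩
    · rw [vertical_toSet (hvert x hx)]
      exact ⟨rfl, hJ x hx⟩
    · rw [vertical_toSet (hvert y hy)]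
      exact ⟨hxy, hJ y hy⟩
  -- extract five neighbors with increasing x-coordinates
  have hfin : N.Finite := Set.toFinite N
  set F := hfin.toFinset with hF
  have hFN : ↑F = N := hfin.coe_toFinset
  have hFcard : 5 ≤ F.card := by
    rw [← Set.ncard_eq_toFinset_card N hfin]
    exact hcard
  have hCcard : 5 ≤ (F.image fun i => (f i).a.1).card := by
    rw [Finset.card_image_of_injOn (by rw [hFN]; exact hinj)]
    exact hFcard
  obtain ⟨C, hCsub, hCcard5⟩ := Finset.exists_subset_card_eq hCcard
  set σ := C.orderIsoOfFin hCcard5 with hσ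
  have hex : ∀ k : Fin 5, ∃ x, x ∈ N ∧ (f x).a.1 = (σ k : ℝ) := by
    intro k
    have hm := hCsub (σ k).2
    rw [Finset.mem_image] at hm
    obtain ⟨x, hxF, hxv⟩ := hm
    exact ⟨x, by rw [← hFN]; exact_mod_cast hxF, hxv⟩
  choose e heN hec using hex
  set c : Fin 5 → ℝ := fun k => (f (e k)).a.1 with hcdef
  have hmono : StrictMono c := by
    intro k l hkl
    show (f (e k)).a.1 < (f (e l)).a.1
    rw [hec k, hec l]
    exact_mod_cast σ.strictMono hkl
  have heinj : ∀ {k l : Fin 5}, k ≠ l → e k ≠ e l := by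
    intro k l hkl hee
    exact hkl (hmono.injective (show c k = c l by simp only [hcdef, hee]))
  -- for each pair, a private horizontal segment
  have hzex : ∀ k l : Fin 5, k ≠ l →
      ∃ z, (f z).Horizontal ∧ (gridGraph f).neighborSet z = {e k, e l} := by
    intro k l hkl
    refine hpair (e k) (e l) (hvert _ (heN k)) (hvert _ (heN l)) (heinj hkl) ⟨b, ?_, ?_⟩
    · exact ((gridGraph f).mem_neighborSet b (e k)).mp (heN k) |>.symm
    · exact ((gridGraph f).mem_neighborSet b (e l)).mp (heN l) |>.symm
  set h₀ := (f b).a.2 with hh0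
  let Z : Fin 5 → Fin 5 → ι := fun k l => if h : k ≠ l then (hzex k l h).choose else b
  have hZH : ∀ k l (h : k ≠ l), (f (Z k l)).Horizontal := by
    intro k l h
    simp only [Z, dif_pos h]
    exact (hzex k l h).choose_spec.1
  have hZN : ∀ k l (h : k ≠ l), (gridGraph f).neighborSet (Z k l) = {e k, e l} := by
    intro k l h
    simp only [Z, dif_pos h]
    exact (hzex k l h).choose_spec.2
  set H : Fin 5 → Fin 5 → ℝ := fun k l => (f (Z k l)).a.2 with hHdef
  set J : Fin 5 → Set ℝ := fun m => Set.uIcc (f (e m)).a.2 (f (e m)).b.2 with hJdef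
  set K : Fin 5 → Fin 5 → Set ℝ := fun k l => Set.uIcc (f (Z k l)).a.1 (f (Z k l)).b.1 with hKdef
  have hP1 : ∀ k l (h : k ≠ l),
      (c k ∈ K k l ∧ c l ∈ K k l) ∧ H k l ∈ J k ∧ H k l ∈ J l := by
    intro k l h
    have hak : (gridGraph f).Adj (Z k l) (e k) := by
      rw [← SimpleGraph.mem_neighborSet, hZN k l h]
      exact Set.mem_insert _ _
    have hal : (gridGraph f).Adj (Z k l) (e l) := by
      rw [← SimpleGraph.mem_neighborSet, hZN k l h]
      exact Set.mem_insert_iff.mpr (Or.inr rfl)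
    have h1 := (adj_horiz_vert (hZH k l h) (hvert _ (heN k))).mp hak
    have h2 := (adj_horiz_vert (hZH k l h) (hvert _ (heN l))).mp hal
    exact ⟨⟨h1.1, h2.1⟩, h1.2, h2.2⟩
  have hP2 : ∀ k m l : Fin 5, k < m → m < l → H k l ∉ J m := by
    intro k m l hkm hml hmem
    have h : k ≠ l := (hkm.trans hml).ne
    have hcm : c m ∈ K k l :=
      Set.uIcc_subset_uIcc (hP1 k l h).1.1 (hP1 k l h).1.2
        (Set.mem_uIcc.mpr (Or.inl ⟨(hmono hkm).le, (hmono hml).le⟩))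
    have hadjm : (gridGraph f).Adj (Z k l) (e m) :=
      (adj_horiz_vert (hZH k l h) (hvert _ (heN m))).mpr ⟨hcm, hmem⟩
    have : e m ∈ ({e k, e l} : Set ι) := by
      rw [← hZN k l h]
      exact hadjm
    simp only [Set.mem_insert_iff, Set.mem_singleton_iff] at this
    rcases this with h' | h'
    · exact (hmono hkm).ne' (show c m = c k by simp only [hcdef, h'])
    · exact (hmono hml).ne (show c m = c l by simp only [hcdef, h'])
  have hP3 : ∀ k m l : Fin 5, k < m → m < l → H k l ≠ h₀ := by
    intro k m l hkm hml heq
    exact hP2 k m l hkm hml (heq ▸ hJ _ (heN m))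
  have cross : ∀ i k j l : Fin 5, i < k → k < j → j < l →
      ((h₀ < H i j) ↔ ¬ (h₀ < H k l)) := by
    intro i k j l hik hkj hjl
    have h1 : H i j ∈ J j := (hP1 i j (hik.trans hkj).ne).2.2
    have h2 : H i j ∉ J k := hP2 i k j hik hkj
    have h3 : H k l ∈ J k := (hP1 k l (hkj.trans hjl).ne).2.1
    have h4 : H k l ∉ J j := hP2 k j l hkj hjl
    have h5 : H i j ≠ h₀ := hP3 i k j hik hkj
    have h6 : H k l ≠ h₀ := hP3 k j l hkj hjl
    have h0k : h₀ ∈ J k := hJ _ (heN k)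
    have h0j : h₀ ∈ J j := hJ _ (heN j)
    constructor
    · intro hij hkl
      rcases le_or_gt (H i j) (H k l) with hle | hlt
      · exact h2 (Set.uIcc_subset_uIcc h0k h3 (Set.mem_uIcc.mpr (Or.inl ⟨hij.le, hle⟩)))
      · exact h4 (Set.uIcc_subset_uIcc h0j h1 (Set.mem_uIcc.mpr (Or.inl ⟨hkl.le, hlt.le⟩)))
    · intro hkl
      rcases lt_trichotomy h₀ (H i j) with h | h | h
      · exact h
      · exact absurd h.symm h5
      · exfalso
        have hkl' : H k l < h₀ := lt_of_le_of_ne (not_lt.mp hkl) h6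
        rcases le_or_gt (H k l) (H i j) with hle | hlt
        · exact h2 (Set.uIcc_subset_uIcc h3 h0k (Set.mem_uIcc.mpr (Or.inl ⟨hle, h.le⟩)))
        · exact h4 (Set.uIcc_subset_uIcc h1 h0j (Set.mem_uIcc.mpr (Or.inl ⟨hlt.le, hkl'.le⟩)))
  have A1 := cross 0 1 2 3 (by decide) (by decide) (by decide)
  have A2 := cross 1 2 3 4 (by decide) (by decide) (by decide)
  have A3 := cross 0 2 3 4 (by decide) (by decide) (by decide)
  have A4 := cross 0 1 3 4 (by decide) (by decide) (by decide)
  have A5 := cross 0 1 2 4 (by decide) (by decide) (by decide)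
  tauto
end

section
/- If G is a connected bipartite graph with bipartition (A,B) and the intersection graph of a grid, 1 ≤ |A| ≤ |B|, and γ(G) = |A|, then for every b ∈ B, the number of neighbors of b that are neither leaves nor support vertices is at most 4. -/
open Finset

variable {V : Type} [Fintype V] [DecidableEq V]

/-! ### Auxiliary lemmas -/

namespace GridAux

lemma not_vert_horiz (s : GridSeg) (hv : s.Vertical) (hh : s.Horizontal) : False :=
  s.ne (Prod.ext hv hh)

lemma mem_vert (s : GridSeg) (hv : s.Vertical) (p : ℝ × ℝ) :
    p ∈ s.toSet ↔ p.1 = s.a.1 ∧ p.2 ∈ Set.uIcc s.a.2 s.b.2 := by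
  rw [GridSeg.toSet, segment_eq_image, ← segment_eq_uIcc, segment_eq_image]
  constructor
  · rintro ⟨θ, hθ, rfl⟩
    constructor
    · simp only [Prod.fst_add, Prod.smul_fst, smul_eq_mul]
      rw [← hv]; ring
    · exact ⟨θ, hθ, rfl⟩
  · rintro ⟨h1, θ, hθ, h2⟩
    refine ⟨θ, hθ, ?_⟩
    apply Prod.ext
    · simp only [Prod.fst_add, Prod.smul_fst, smul_eq_mul]
      rw [h1, ← hv]; ring
    · simp only [Prod.snd_add, Prod.smul_snd, smul_eq_mul]
      simp only [smul_eq_mul] at h2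
      rw [← h2]

lemma mem_horiz (s : GridSeg) (hh : s.Horizontal) (p : ℝ × ℝ) :
    p ∈ s.toSet ↔ p.2 = s.a.2 ∧ p.1 ∈ Set.uIcc s.a.1 s.b.1 := by
  rw [GridSeg.toSet, segment_eq_image, ← segment_eq_uIcc, segment_eq_image]
  constructor
  · rintro ⟨θ, hθ, rfl⟩
    constructor
    · simp only [Prod.snd_add, Prod.smul_snd, smul_eq_mul]
      rw [← hh]; ring
    · exact ⟨θ, hθ, rfl⟩
  · rintro ⟨h1, θ, hθ, h2⟩
    refine ⟨θ, hθ, ?_⟩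
    apply Prod.ext
    · simp only [Prod.fst_add, Prod.smul_fst, smul_eq_mul]
      simp only [smul_eq_mul] at h2
      rw [← h2]
    · simp only [Prod.snd_add, Prod.smul_snd, smul_eq_mul]
      rw [h1, ← hh]; ring

lemma mem_uIcc_minmax {a b y : ℝ} :
    y ∈ Set.uIcc a b ↔ min a b ≤ y ∧ y ≤ max a b := by
  rw [Set.uIcc, Set.mem_Icc]

section Lemmas
variable {ι : Type} [Fintype ι] (f : ι → GridSeg)

lemma collinear_vert {s t : GridSeg} (hs : s.Vertical) (ht : t.Vertical)
    (hx : s.a.1 = t.a.1) : Collinear ℝ (s.toSet ∪ t.toSet) := by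
  rw [collinear_iff_exists_forall_eq_smul_vadd]
  refine ⟨(s.a.1, 0), (0, 1), ?_⟩
  rintro p (hp | hp)
  · rw [mem_vert s hs] at hp
    exact ⟨p.2, by simp [Prod.ext_iff, hp.1]⟩
  · rw [mem_vert t ht] at hp
    exact ⟨p.2, by simp [Prod.ext_iff, hp.1, hx]⟩

lemma collinear_horiz {s t : GridSeg} (hs : s.Horizontal) (ht : t.Horizontal)
    (hy : s.a.2 = t.a.2) : Collinear ℝ (s.toSet ∪ t.toSet) := by
  rw [collinear_iff_exists_forall_eq_smul_vadd]
  refine ⟨(0, s.a.2), (1, 0), ?_⟩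
  rintro p (hp | hp)
  · rw [mem_horiz s hs] at hp
    exact ⟨p.1, by simp [Prod.ext_iff, hp.1]⟩
  · rw [mem_horiz t ht] at hp
    exact ⟨p.1, by simp [Prod.ext_iff, hp.1, hy]⟩

lemma not_adj_vert (hgrid : IsGrid f) {i j : ι} (hi : (f i).Vertical)
    (hj : (f j).Vertical) : ¬ (gridGraph f).Adj i j := by
  rintro ⟨hne, p, hpi, hpj⟩
  have h1 := ((mem_vert _ hi p).1 hpi).1
  have h2 := ((mem_vert _ hj p).1 hpj).1
  exact Set.disjoint_left.1
    (hgrid.2.2.1 i j hne (collinear_vert hi hj (h1 ▸ h2 ▸ rfl))) hpi hpj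

lemma not_adj_horiz (hgrid : IsGrid f) {i j : ι} (hi : (f i).Horizontal)
    (hj : (f j).Horizontal) : ¬ (gridGraph f).Adj i j := by
  rintro ⟨hne, p, hpi, hpj⟩
  have h1 := ((mem_horiz _ hi p).1 hpi).1
  have h2 := ((mem_horiz _ hj p).1 hpj).1
  exact Set.disjoint_left.1
    (hgrid.2.2.1 i j hne (collinear_horiz hi hj (h1 ▸ h2 ▸ rfl))) hpi hpj

omit [Fintype ι] in
lemma adj_iff {i j : ι} (hi : (f i).Vertical) (hj : (f j).Horizontal) :
    (gridGraph f).Adj i j ↔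
      (f i).a.1 ∈ Set.uIcc (f j).a.1 (f j).b.1 ∧
      (f j).a.2 ∈ Set.uIcc (f i).a.2 (f i).b.2 := by
  constructor
  · rintro ⟨hne, p, hpi, hpj⟩
    rw [mem_vert _ hi] at hpi
    rw [mem_horiz _ hj] at hpj
    exact ⟨hpi.1 ▸ hpj.2, hpj.1 ▸ hpi.2⟩
  · rintro ⟨h1, h2⟩
    refine ⟨fun h => not_vert_horiz (f i) hi (h ▸ hj), ⟨((f i).a.1, (f j).a.2), ?_, ?_⟩⟩
    · rw [mem_vert _ hi]; exact ⟨rfl, h2⟩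
    · rw [mem_horiz _ hj]; exact ⟨rfl, h1⟩

lemma exists_neighbor {G : SimpleGraph ι} (hconn : G.Connected)
    (hcard : 2 ≤ Fintype.card ι) (v : ι) : ∃ u, G.Adj v u := by
  obtain ⟨w, hw⟩ := Fintype.exists_ne_of_one_lt_card (by omega) v
  obtain ⟨p⟩ := hconn.preconnected v w
  cases p with
  | nil => exact absurd rfl hw.symm
  | cons h q => exact ⟨_, h⟩

end Lemmas

lemma arith_core (h1 h2 h3 h4 h5 l1 l2 l3 l4 l5 : ℝ)
    (p13 : (h2 < h1 ∧ h2 < h3) ∨ (l1 < l2 ∧ l3 < l2))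
    (p14 : (h2 < h1 ∧ h2 < h4 ∧ h3 < h1 ∧ h3 < h4) ∨
      (l1 < l2 ∧ l4 < l2 ∧ l1 < l3 ∧ l4 < l3))
    (p15 : (h2 < h1 ∧ h2 < h5 ∧ h3 < h1 ∧ h3 < h5 ∧ h4 < h1 ∧ h4 < h5) ∨
      (l1 < l2 ∧ l5 < l2 ∧ l1 < l3 ∧ l5 < l3 ∧ l1 < l4 ∧ l5 < l4))
    (p24 : (h3 < h2 ∧ h3 < h4) ∨ (l2 < l3 ∧ l4 < l3))
    (p25 : (h3 < h2 ∧ h3 < h5 ∧ h4 < h2 ∧ h4 < h5) ∨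
      (l2 < l3 ∧ l5 < l3 ∧ l2 < l4 ∧ l5 < l4))
    (p35 : (h4 < h3 ∧ h4 < h5) ∨ (l3 < l4 ∧ l5 < l4)) :
    False := by
  rcases p13 with ⟨a,b⟩|⟨a',b'⟩ <;> rcases p14 with ⟨c,d,e,g⟩|⟨c',d',e',g'⟩ <;>
    rcases p15 with ⟨i1,i2,i3,i4,i5,i6⟩|⟨j1,j2,j3,j4,j5,j6⟩ <;>
    rcases p24 with ⟨k1,k2⟩|⟨k3,k4⟩ <;>
    rcases p25 with ⟨m1,m2,m3,m4⟩|⟨m5,m6,m7,m8⟩ <;>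
    rcases p35 with ⟨n1,n2⟩|⟨n3,n4⟩ <;> linarith


theorem core {ι : Type} [Fintype ι] [DecidableEq ι] (f : ι → GridSeg)
    (hgrid : IsGrid f) (hconn : (gridGraph f).Connected)
    (hdom : domNum (gridGraph f) = {i | (f i).Vertical}.ncard)
    (b : ι) (hb : (f b).Horizontal) :
    {u : ι | (gridGraph f).Adj b u ∧
        ((gridGraph f).neighborSet u).ncard ≠ 1 ∧
        ¬ ∃ w, (gridGraph f).Adj u w ∧ ((gridGraph f).neighborSet w).ncard = 1}.ncard
      ≤ 4 := by
  classical
  set F := {u : ι | (gridGraph f).Adj b u ∧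
      ((gridGraph f).neighborSet u).ncard ≠ 1 ∧
      ¬ ∃ w, (gridGraph f).Adj u w ∧ ((gridGraph f).neighborSet w).ncard = 1}
    with hFdef
  by_contra hle
  push_neg at hle
  have hVH : ∀ i : ι, (f i).Vertical ∨ (f i).Horizontal := fun i => (f i).aligned
  have hFV : ∀ u ∈ F, (f u).Vertical := by
    intro u hu
    rcases hVH u with h | h
    · exact h
    · exact absurd hu.1 (not_adj_horiz f hgrid hb h)
  -- five elements of F
  have hfin : F.Finite := Set.toFinite F
  have hcard5 : 5 ≤ hfin.toFinset.card := by
    rw [← Set.ncard_eq_toFinset_card F hfin]; omega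
  obtain ⟨T, hTsub, hTcard⟩ := Finset.exists_subset_card_eq hcard5
  have hTF : ∀ u ∈ T, u ∈ F := fun u hu => hfin.mem_toFinset.1 (hTsub hu)
  -- x-coordinates are injective on F
  have hxinj : ∀ u ∈ F, ∀ v ∈ F, (f u).a.1 = (f v).a.1 → u = v := by
    intro u hu v hv hx
    by_contra hne
    have h1 := (adj_iff f (hFV u hu) hb).1 hu.1.symm
    have h2 := (adj_iff f (hFV v hv) hb).1 hv.1.symm
    apply not_adj_vert f hgrid (hFV u hu) (hFV v hv)
    refine ⟨hne, ((f u).a.1, (f b).a.2), ?_, ?_⟩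
    · rw [mem_vert _ (hFV u hu)]; exact ⟨rfl, h1.2⟩
    · rw [mem_vert _ (hFV v hv)]; exact ⟨hx, h2.2⟩
  -- sorted x-coordinates
  set X : Finset ℝ := T.image fun i => (f i).a.1 with hXdef
  have hXcard : X.card = 5 := by
    rw [hXdef, Finset.card_image_of_injOn, hTcard]
    intro p hp q hq h
    exact hxinj p (hTF p hp) q (hTF q hq) h
  set x : Fin 5 → ℝ := fun m => X.orderEmbOfFin hXcard m with hxdef
  have hxmono : StrictMono x := (X.orderEmbOfFin hXcard).strictMono
  have hxmem : ∀ m : Fin 5, ∃ v, v ∈ F ∧ (f v).a.1 = x m := by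
    intro m
    obtain ⟨v, hv, hvx⟩ := Finset.mem_image.1 (Finset.orderEmbOfFin_mem X hXcard m)
    exact ⟨v, hTF v hv, hvx⟩
  choose u hu hux using hxmem
  have huinj : ∀ m n : Fin 5, u m = u n → m = n := fun m n h =>
    hxmono.injective (by rw [← hux m, ← hux n, h])
  have hadj : ∀ m, (gridGraph f).Adj b (u m) := fun m => (hu m).1
  have hfree : ∀ m, ¬ ∃ w, (gridGraph f).Adj (u m) w ∧
      ((gridGraph f).neighborSet w).ncard = 1 := fun m => (hu m).2.2
  have hvert : ∀ m, (f (u m)).Vertical := fun m => hFV _ (hu m)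
  have hcross : ∀ m, (f (u m)).a.1 ∈ Set.uIcc (f b).a.1 (f b).b.1 ∧
      (f b).a.2 ∈ Set.uIcc (f (u m)).a.2 (f (u m)).b.2 :=
    fun m => (adj_iff f (hvert m) hb).1 (hadj m).symm
  -- the finset of vertical segments
  set A' : Finset ι := Finset.univ.filter (fun i => (f i).Vertical) with hA'def
  have hA'mem : ∀ i, i ∈ A' ↔ (f i).Vertical := by
    intro i; simp [hA'def]
  have hncA : {i | (f i).Vertical}.ncard = A'.card := by
    rw [← Set.ncard_coe_finset]
    congr 1
    ext i; simp [hA'def]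
  -- key step : for each pair there is a "private" horizontal segment
  have key : ∀ m n : Fin 5, m ≠ n → ∃ w, w ≠ b ∧ (f w).Horizontal ∧
      (gridGraph f).Adj (u m) w ∧ (gridGraph f).Adj (u n) w ∧
      ∀ k : Fin 5, k ≠ m → k ≠ n → ¬ (gridGraph f).Adj (u k) w := by
    intro m n hmn
    by_contra hno
    push_neg at hno
    have humem : u m ∈ A' := (hA'mem _).2 (hvert m)
    have hunmem : u n ∈ A' := (hA'mem _).2 (hvert n)
    have hbA' : b ∉ A' := fun h => not_vert_horiz _ ((hA'mem b).1 h) hb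
    have hunm : u n ≠ u m := fun h => hmn (huinj n m h).symm
    set D : Finset ι := insert b ((A'.erase (u m)).erase (u n)) with hD
    have h2A : 2 ≤ A'.card := Finset.one_lt_card.2 ⟨u m, humem, u n, hunmem, hunm.symm⟩
    have hbD : b ∉ (A'.erase (u m)).erase (u n) := fun h =>
      hbA' (Finset.mem_of_mem_erase (Finset.mem_of_mem_erase h))
    have hDcard : D.card = A'.card - 1 := by
      rw [hD, Finset.card_insert_of_notMem hbD, Finset.card_erase_of_mem
        (Finset.mem_erase.2 ⟨hunm, hunmem⟩), Finset.card_erase_of_mem humem]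
      omega
    have hDmem : ∀ i, (f i).Vertical → i ≠ u m → i ≠ u n → i ∈ D := by
      intro i hi h1 h2
      exact Finset.mem_insert_of_mem (Finset.mem_erase.2 ⟨h2, Finset.mem_erase.2
        ⟨h1, (hA'mem i).2 hi⟩⟩)
    have hDdom : IsDomSet (gridGraph f) D := by
      intro v hv
      rcases hVH v with hvV | hvH
      · -- vertical vertex not in D must be u m or u n; b dominates it
        have : v = u m ∨ v = u n := by
          by_contra hc; push_neg at hc
          exact hv (hDmem v hvV hc.1 hc.2)
        refine ⟨b, Finset.mem_insert_self _ _, ?_⟩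
        rcases this with rfl | rfl
        · exact hadj m
        · exact hadj n
      · -- horizontal vertex
        have hvb : v ≠ b := fun h => hv (h ▸ Finset.mem_insert_self _ _)
        by_cases hdomv : ∃ z ∈ D, (gridGraph f).Adj z v
        · exact hdomv
        · push_neg at hdomv
          have hNsub : ∀ z, (gridGraph f).Adj v z → z = u m ∨ z = u n := by
            intro z hz
            have hzV : (f z).Vertical := by
              rcases hVH z with h | h
              · exact h
              · exact absurd hz (not_adj_horiz f hgrid hvH h)
            by_contra hc; push_neg at hc
            exact hdomv z (hDmem z hzV hc.1 hc.2) hz.symm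
          obtain ⟨z, hz⟩ := exists_neighbor hconn hgrid.2.1 v
          by_cases hboth : (gridGraph f).Adj v (u m) ∧ (gridGraph f).Adj v (u n)
          · obtain ⟨k, hkm, hkn, hk⟩ := hno v hvb hvH hboth.1.symm hboth.2.symm
            have hkuk : u k ≠ u m := fun h => hkm (huinj k m h)
            have hkun : u k ≠ u n := fun h => hkn (huinj k n h)
            exact absurd hk (hdomv (u k) (hDmem (u k) (hvert k) hkuk hkun))
          · have hsing : ∃ m0 : Fin 5, (gridGraph f).Adj v (u m0) ∧
                (gridGraph f).neighborSet v = {u m0} := by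
              rcases hNsub z hz with rfl | rfl
              · refine ⟨m, hz, ?_⟩
                ext y
                simp only [SimpleGraph.mem_neighborSet, Set.mem_singleton_iff]
                refine ⟨fun hy => ?_, fun hy => hy ▸ hz⟩
                rcases hNsub y hy with rfl | rfl
                · rfl
                · exact absurd ⟨hz, hy⟩ hboth
              · refine ⟨n, hz, ?_⟩
                ext y
                simp only [SimpleGraph.mem_neighborSet, Set.mem_singleton_iff]
                refine ⟨fun hy => ?_, fun hy => hy ▸ hz⟩
                rcases hNsub y hy with rfl | rfl
                · exact absurd ⟨hy, hz⟩ hboth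
                · rfl
            obtain ⟨m0, hP, hNv⟩ := hsing
            exact absurd ⟨v, hP.symm, by rw [hNv, Set.ncard_singleton]⟩ (hfree m0)
    have hles : domNum (gridGraph f) ≤ A'.card - 1 :=
      Nat.sInf_le ⟨D, hDdom, hDcard⟩
    rw [hdom, hncA] at hles
    omega
  -- geometry : extents
  set lo : Fin 5 → ℝ := fun m => min (f (u m)).a.2 (f (u m)).b.2 with hlodef
  set hi : Fin 5 → ℝ := fun m => max (f (u m)).a.2 (f (u m)).b.2 with hhidef
  have hy0 : ∀ m, lo m ≤ (f b).a.2 ∧ (f b).a.2 ≤ hi m := by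
    intro m
    have := mem_uIcc_minmax.1 (hcross m).2
    exact this
  have geo : ∀ m n : Fin 5, m < n →
      (∀ k, m < k → k < n → hi k < hi m ∧ hi k < hi n) ∨
      (∀ k, m < k → k < n → lo m < lo k ∧ lo n < lo k) := by
    intro m n hmn
    obtain ⟨w, hwb, hwH, hwm, hwn, hwk⟩ := key m n (ne_of_lt hmn)
    have hwmc := (adj_iff f (hvert m) hwH).1 hwm
    have hwnc := (adj_iff f (hvert n) hwH).1 hwn
    -- the height of w differs from that of b
    have hyne : (f w).a.2 ≠ (f b).a.2 := by
      intro heq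
      apply not_adj_horiz f hgrid hwH hb
      refine ⟨hwb, ((f (u m)).a.1, (f w).a.2), ?_, ?_⟩
      · rw [mem_horiz _ hwH]; exact ⟨rfl, hwmc.1⟩
      · rw [mem_horiz _ hb]; exact ⟨heq, (hcross m).1⟩
    have hky : ∀ k, m < k → k < n →
        (f w).a.2 < lo k ∨ hi k < (f w).a.2 := by
      intro k hk1 hk2
      have hnadj := hwk k (ne_of_gt hk1) (ne_of_lt hk2)
      rw [adj_iff f (hvert k) hwH] at hnadj
      by_contra hc
      push_neg at hc
      apply hnadj
      constructor
      · rw [mem_uIcc_minmax]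
        have e1 := mem_uIcc_minmax.1 hwmc.1
        have e2 := mem_uIcc_minmax.1 hwnc.1
        have l1 : x m < x k := hxmono hk1
        have l2 : x k < x n := hxmono hk2
        rw [← hux m, ← hux k] at l1
        rw [← hux k, ← hux n] at l2
        constructor <;> linarith [e1.1, e1.2, e2.1, e2.2]
      · rw [mem_uIcc_minmax]
        exact ⟨hc.1, hc.2⟩
    have hwmy := mem_uIcc_minmax.1 hwmc.2
    have hwny := mem_uIcc_minmax.1 hwnc.2
    rcases lt_or_gt_of_ne hyne with hlt | hgt
    · right
      intro k hk1 hk2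
      rcases hky k hk1 hk2 with h | h
      · exact ⟨lt_of_le_of_lt hwmy.1 h, lt_of_le_of_lt hwny.1 h⟩
      · exact absurd h (by have := (hy0 k).2; linarith)
    · left
      intro k hk1 hk2
      rcases hky k hk1 hk2 with h | h
      · exact absurd h (by have := (hy0 k).1; linarith)
      · exact ⟨lt_of_lt_of_le h hwmy.2, lt_of_lt_of_le h hwny.2⟩
  -- final arithmetic contradiction
  have g02 := geo 0 2 (by decide)
  have g03 := geo 0 3 (by decide)
  have g04 := geo 0 4 (by decide)
  have g13 := geo 1 3 (by decide)
  have g14 := geo 1 4 (by decide)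
  have g24 := geo 2 4 (by decide)
  refine arith_core (hi 0) (hi 1) (hi 2) (hi 3) (hi 4) (lo 0) (lo 1) (lo 2) (lo 3) (lo 4)
    ?_ ?_ ?_ ?_ ?_ ?_
  · exact g02.imp (fun h => h 1 (by decide) (by decide))
      (fun h => h 1 (by decide) (by decide))
  · exact g03.imp
      (fun h => ⟨(h 1 (by decide) (by decide)).1, (h 1 (by decide) (by decide)).2,
        (h 2 (by decide) (by decide)).1, (h 2 (by decide) (by decide)).2⟩)
      (fun h => ⟨(h 1 (by decide) (by decide)).1, (h 1 (by decide) (by decide)).2,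
        (h 2 (by decide) (by decide)).1, (h 2 (by decide) (by decide)).2⟩)
  · exact g04.imp
      (fun h => ⟨(h 1 (by decide) (by decide)).1, (h 1 (by decide) (by decide)).2,
        (h 2 (by decide) (by decide)).1, (h 2 (by decide) (by decide)).2,
        (h 3 (by decide) (by decide)).1, (h 3 (by decide) (by decide)).2⟩)
      (fun h => ⟨(h 1 (by decide) (by decide)).1, (h 1 (by decide) (by decide)).2,
        (h 2 (by decide) (by decide)).1, (h 2 (by decide) (by decide)).2,
        (h 3 (by decide) (by decide)).1, (h 3 (by decide) (by decide)).2⟩)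
  · exact g13.imp (fun h => h 2 (by decide) (by decide))
      (fun h => h 2 (by decide) (by decide))
  · exact g14.imp
      (fun h => ⟨(h 2 (by decide) (by decide)).1, (h 2 (by decide) (by decide)).2,
        (h 3 (by decide) (by decide)).1, (h 3 (by decide) (by decide)).2⟩)
      (fun h => ⟨(h 2 (by decide) (by decide)).1, (h 2 (by decide) (by decide)).2,
        (h 3 (by decide) (by decide)).1, (h 3 (by decide) (by decide)).2⟩)
  · exact g24.imp (fun h => h 3 (by decide) (by decide))
      (fun h => h 3 (by decide) (by decide))


def tseg (s : GridSeg) : GridSeg where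
  a := s.a.swap
  b := s.b.swap
  ne := fun h => s.ne (Prod.swap_injective h)
  aligned := s.aligned.symm

lemma tseg_toSet (s : GridSeg) : (tseg s).toSet = Prod.swap '' s.toSet := by
  have h := image_segment ℝ ((LinearEquiv.prodComm ℝ ℝ ℝ).toLinearMap.toAffineMap) s.a s.b
  simp only [LinearMap.coe_toAffineMap, LinearEquiv.coe_coe] at h
  have h2 : ⇑(LinearEquiv.prodComm ℝ ℝ ℝ) = Prod.swap := by
    funext p; rfl
  rw [h2] at h
  exact h.symm

lemma collinear_swap {S : Set (ℝ × ℝ)} (h : Collinear ℝ (Prod.swap '' S)) :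
    Collinear ℝ S := by
  rw [collinear_iff_exists_forall_eq_smul_vadd] at h ⊢
  obtain ⟨p0, v, hv⟩ := h
  refine ⟨p0.swap, v.swap, fun p hp => ?_⟩
  obtain ⟨r, hr⟩ := hv p.swap ⟨p, hp, rfl⟩
  refine ⟨r, ?_⟩
  have := congrArg Prod.swap hr
  rw [Prod.swap_swap] at this
  rw [this]
  simp [Prod.ext_iff]

lemma gridGraph_tseg {ι : Type} (f : ι → GridSeg) :
    gridGraph (fun i => tseg (f i)) = gridGraph f := by
  ext i j
  show i ≠ j ∧ _ ↔ i ≠ j ∧ _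
  rw [tseg_toSet, tseg_toSet]
  constructor
  · rintro ⟨hne, hne2⟩
    refine ⟨hne, ?_⟩
    rw [← Set.image_inter Prod.swap_injective] at hne2
    exact (Set.image_nonempty).1 hne2
  · rintro ⟨hne, hne2⟩
    refine ⟨hne, ?_⟩
    rw [← Set.image_inter Prod.swap_injective]
    exact hne2.image _

lemma isGrid_tseg {ι : Type} [Fintype ι] {f : ι → GridSeg} (hgrid : IsGrid f) :
    IsGrid (fun i => tseg (f i)) := by
  obtain ⟨h1, h2, h3, h4⟩ := hgrid
  refine ⟨?_, h2, ?_, ?_⟩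
  · intro i j h
    simp only [tseg_toSet] at h
    exact h1 i j (Set.image_injective.mpr Prod.swap_injective h)
  · intro i j hne hcol
    simp only [tseg_toSet] at hcol ⊢
    rw [← Set.image_union] at hcol
    rw [Set.disjoint_image_iff Prod.swap_injective]
    exact h3 i j hne (collinear_swap hcol)
  · simp only [tseg_toSet, ← Set.image_iUnion]
    exact h4.image _ continuous_swap.continuousOn

end GridAux

open GridAux in
theorem grid_nonleaf_nonsupport_neighbors_le_four {ι : Type} [Fintype ι] [DecidableEq ι]
    (f : ι → GridSeg) (hgrid : IsGrid f) (A B : Set ι)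
    (hAB : (A = {i | (f i).Vertical} ∧ B = {i | (f i).Horizontal}) ∨
           (A = {i | (f i).Horizontal} ∧ B = {i | (f i).Vertical}))
    (hconn : (gridGraph f).Connected)
    (hA : 1 ≤ A.ncard) (hcard : A.ncard ≤ B.ncard)
    (hdom : domNum (gridGraph f) = A.ncard) :
    ∀ b ∈ B,
      {u : ι | (gridGraph f).Adj b u ∧
          ((gridGraph f).neighborSet u).ncard ≠ 1 ∧
          ¬ ∃ w, (gridGraph f).Adj u w ∧ ((gridGraph f).neighborSet w).ncard = 1}.ncard
        ≤ 4 := by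
  intro b hbB
  rcases hAB with ⟨hA1, hB1⟩ | ⟨hA1, hB1⟩
  · have hb : (f b).Horizontal := by rw [hB1] at hbB; exact hbB
    exact core f hgrid hconn (by rw [hdom, hA1]) b hb
  · have hb : (f b).Vertical := by rw [hB1] at hbB; exact hbB
    set f' : ι → GridSeg := fun i => tseg (f i) with hf'
    have hG : gridGraph f' = gridGraph f := gridGraph_tseg f
    have h1 : IsGrid f' := isGrid_tseg hgrid
    have h2 : (gridGraph f').Connected := by rw [hG]; exact hconn
    have hset : {i | (f' i).Vertical} = A := by
      rw [hA1]; rfl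
    have h3 : domNum (gridGraph f') = {i | (f' i).Vertical}.ncard := by
      rw [hG, hset]; exact hdom
    have h4 : (f' b).Horizontal := hb
    have := core f' h1 h2 h3 b h4
    rw [hG] at this
    exact this
end
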